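/- arXiv:0707.1733 — 3 statements merged into one kernel-verified Lean document; each statement's English description precedes it below -/
import Mathlib

section
/- The R-span S^p of Z^p is a subalgebra of the cyclotomic q-Schur algebra S(Λ) containing its identity element; moreover, S^p is a standardly based algebra with standard basis Z^p over the poset Σ^p: Z^p is the disjoint union of the sets Z^p(ε) over ε ∈ Σ^p, and for every φ ∈ S^p and every φ_{ST} ∈ Z^p(ε) one has φ · φ_{ST} ≡ Σ_{S' ∈ I^p(ε)} f_{S'} φ_{S'T} mod (S^p)^{∨ε}, where each f_{S'} ∈ R depends only on (φ, S, S') and not on T, and φ_{ST} · φ ≡ Σ_{T' ∈ J^p(ε)} f'_{T'} φ_{ST'} mod (S^p)^{∨ε}, where each f'_{T'} ∈ R depends only on (φ, T, T') and not on S. -/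
/-!
Common framework for the formalization of results of Shoji–Wada,
"Cyclotomic q-Schur algebras associated to the Ariki-Koike algebra".
-/

open scoped BigOperators TensorProduct
open MulOpposite

noncomputable section

/-! ## Multicompositions -/

/-- An `r`-multicomposition of `n`, whose `k`-th component is a composition
of length `≤ m k`. -/
structure MultiComp (n r : ℕ) (m : Fin r → ℕ) where
  part : (k : Fin r) → Fin (m k) → ℕ
  sum_eq : (∑ k, ∑ i, part k i) = n

namespace MultiComp

variable {n r : ℕ} {m : Fin r → ℕ}

theorem part_injective : Function.Injective (part : MultiComp n r m → _) := by
  rintro ⟨a, _⟩ ⟨b, _⟩ h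
  simpa using h

instance : DecidableEq (MultiComp n r m) := fun a b =>
  decidable_of_iff (a.part = b.part) part_injective.eq_iff

theorem part_le_n (lam : MultiComp n r m) (k : Fin r) (i : Fin (m k)) :
    lam.part k i ≤ n := by
  calc lam.part k i ≤ ∑ i, lam.part k i :=
        Finset.single_le_sum (fun _ _ => Nat.zero_le _) (Finset.mem_univ i)
    _ ≤ ∑ k, ∑ i, lam.part k i :=
        Finset.single_le_sum (f := fun k => ∑ i, lam.part k i)
          (fun _ _ => Nat.zero_le _) (Finset.mem_univ k)
    _ = n := lam.sum_eq

instance : Fintype (MultiComp n r m) :=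
  Fintype.ofInjective
    (fun lam (k : Fin r) (i : Fin (m k)) =>
      (⟨lam.part k i, Nat.lt_succ_of_le (part_le_n lam k i)⟩ : Fin (n + 1)))
    (fun a b h => part_injective (by
      funext k i
      exact congrArg Fin.val (congrFun (congrFun h k) i)))

/-- an `r`-multipartition: every component is weakly decreasing -/
def IsPartition (lam : MultiComp n r m) : Prop :=
  ∀ (k : Fin r) (i j : Fin (m k)), i ≤ j → lam.part k j ≤ lam.part k i

instance (lam : MultiComp n r m) : Decidable lam.IsPartition := by
  unfold IsPartition; infer_instance

/-- the size `|λ^{(k)}|` of the `k`-th component -/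
def compSize (lam : MultiComp n r m) (k : Fin r) : ℕ := ∑ i, lam.part k i

/-- the dominance order `λ ⊵ μ` on multicompositions -/
def Dominates (lam mu : MultiComp n r m) : Prop :=
  ∀ (k : Fin r) (i : Fin (m k)),
    ((∑ c ∈ Finset.univ.filter fun c => c < k, mu.compSize c) +
        ∑ j ∈ Finset.univ.filter fun j => j ≤ i, mu.part k j) ≤
      (∑ c ∈ Finset.univ.filter fun c => c < k, lam.compSize c) +
        ∑ j ∈ Finset.univ.filter fun j => j ≤ i, lam.part k j

/-- the strict dominance order `λ ⊳ μ` -/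
def SDominates (lam mu : MultiComp n r m) : Prop :=
  Dominates lam mu ∧ lam ≠ mu

end MultiComp

/-- `Λ` is a saturated set of multicompositions: it contains every multipartition
dominating one of its members. -/
def Saturated {n r : ℕ} {m : Fin r → ℕ} (Λ : Finset (MultiComp n r m)) : Prop :=
  ∀ lam : MultiComp n r m, lam.IsPartition →
    (∃ mu ∈ Λ, MultiComp.Dominates lam mu) → lam ∈ Λ

/-! ## Tableaux -/

/-- the set of entries `(i,k)` (row `i` of component `k`) for tableaux -/
abbrev MCEntry (r : ℕ) (m : Fin r → ℕ) := Σ k : Fin r, Fin (m k)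

/-- the total order on entries: `(i₁,k₁) ≤ (i₂,k₂)` iff `k₁ < k₂`, or `k₁ = k₂` and
`i₁ ≤ i₂`. -/
def entryLE {r : ℕ} {m : Fin r → ℕ} (a b : MCEntry r m) : Prop :=
  a.1 < b.1 ∨ (a.1 = b.1 ∧ (a.2 : ℕ) ≤ (b.2 : ℕ))

/-- the associated strict order on entries -/
def entryLT {r : ℕ} {m : Fin r → ℕ} (a b : MCEntry r m) : Prop :=
  a.1 < b.1 ∨ (a.1 = b.1 ∧ (a.2 : ℕ) < (b.2 : ℕ))

/-- the cells `(k, i, j)` (component `k`, row `i`, column `j`) of the Young diagram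
of a multicomposition -/
abbrev MultiComp.Cell {n r : ℕ} {m : Fin r → ℕ} (lam : MultiComp n r m) :=
  Σ (k : Fin r) (i : Fin (m k)), Fin (lam.part k i)

/-- Semistandard tableaux of shape `lam` and type `mu` in the sense of
Dipper–James–Mathas: rows weakly increase, columns strictly increase, the entries of
the `k`-th component have second coordinate `≥ k`, and for each entry `(i,k)` the
number of cells carrying it equals `mu.part k i`. -/
structure SSTab {n r : ℕ} {m : Fin r → ℕ} (lam mu : MultiComp n r m) where
  entry : lam.Cell → MCEntry r m
  rowWeak : ∀ (k : Fin r) (i : Fin (m k)) (j j' : Fin (lam.part k i)),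
    j ≤ j' → entryLE (entry ⟨k, i, j⟩) (entry ⟨k, i, j'⟩)
  colStrict : ∀ (k : Fin r) (i i' : Fin (m k)) (j : ℕ)
    (hj : j < lam.part k i) (hj' : j < lam.part k i'), i < i' →
    entryLT (entry ⟨k, i, ⟨j, hj⟩⟩) (entry ⟨k, i', ⟨j, hj'⟩⟩)
  compLE : ∀ c : lam.Cell, c.1 ≤ (entry c).1
  typeCount : ∀ e : MCEntry r m,
    mu.part e.1 e.2 = Fintype.card {c : lam.Cell // entry c = e}

namespace SSTab

variable {n r : ℕ} {m : Fin r → ℕ} {lam mu : MultiComp n r m}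

theorem entry_injective : Function.Injective (entry : SSTab lam mu → _) := by
  rintro ⟨a, _, _, _, _⟩ ⟨b, _, _, _, _⟩ h
  simpa using h

instance : Fintype (SSTab lam mu) := Fintype.ofInjective entry entry_injective

instance : DecidableEq (SSTab lam mu) := fun a b =>
  decidable_of_iff (a.entry = b.entry) entry_injective.eq_iff

end SSTab

/-- Standard tableaux of shape `lam`: bijective fillings of the diagram by the
letters `1, …, n`, increasing along rows and down columns. -/
structure StdTab {n r : ℕ} {m : Fin r → ℕ} (lam : MultiComp n r m) where
  entry : lam.Cell → Fin n
  bij : Function.Bijective entry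
  rowStrict : ∀ (k : Fin r) (i : Fin (m k)) (j j' : Fin (lam.part k i)),
    j < j' → entry ⟨k, i, j⟩ < entry ⟨k, i, j'⟩
  colStrict : ∀ (k : Fin r) (i i' : Fin (m k)) (j : ℕ)
    (hj : j < lam.part k i) (hj' : j < lam.part k i'), i < i' →
    entry ⟨k, i, ⟨j, hj⟩⟩ < entry ⟨k, i', ⟨j, hj'⟩⟩

namespace StdTab

variable {n r : ℕ} {m : Fin r → ℕ} {lam : MultiComp n r m}

theorem entry_injective : Function.Injective (entry : StdTab lam → _) := by
  rintro ⟨a, _, _, _⟩ ⟨b, _, _, _⟩ h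
  simpa using h

instance : Fintype (StdTab lam) := Fintype.ofInjective entry entry_injective

end StdTab
/-! ## The block structure attached to `p = (r₁, …, r_g)` -/

/-- componentwise comparison of vectors in `ℤ_{≥0}^g` -/
def vecLE {g : ℕ} (f h : Fin g → ℕ) : Prop := ∀ b, f b ≤ h b

instance {g : ℕ} (f h : Fin g → ℕ) : Decidable (vecLE f h) := by
  unfold vecLE; infer_instance

/-- strict componentwise comparison: `f ≤ h` componentwise and `f ≠ h` -/
def vecLT {g : ℕ} (f h : Fin g → ℕ) : Prop := vecLE f h ∧ f ≠ h

instance {g : ℕ} (f h : Fin g → ℕ) : Decidable (vecLT f h) := by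
  unfold vecLT; infer_instance

/-- The datum of `p = (r₁, …, r_g)`, encoded by the map sending a component
`k ∈ {1, …, r}` to its block: the fibers of `π` are the intervals
`{p_b + 1, …, p_b + r_b}`, of sizes `r_b > 0`. -/
structure BlockCtx (r g : ℕ) where
  π : Fin r → Fin g
  mono : Monotone π
  surj : Function.Surjective π

namespace BlockCtx

variable {r g : ℕ} (P : BlockCtx r g) {n : ℕ} {m : Fin r → ℕ}

/-- `α_p(μ) = (n₁, …, n_g)`, `n_b = |μ^{[b]}|` -/
def alphaP (mu : MultiComp n r m) : Fin g → ℕ := fun b =>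
  ∑ k ∈ Finset.univ.filter fun k => P.π k = b, mu.compSize k

/-- `a_p(μ) = (a₁, …, a_g)`, `a_b = n₁ + ⋯ + n_{b-1}` -/
def aP (mu : MultiComp n r m) : Fin g → ℕ := fun b =>
  ∑ k ∈ Finset.univ.filter fun k => P.π k < b, mu.compSize k

/-- `r_b`, the number of components in block `b` -/
def rblk (b : Fin g) : ℕ := (Finset.univ.filter fun k => P.π k = b).card

/-- the components in block `b`, listed in increasing order -/
def blkEquiv (b : Fin g) :
    Fin (P.rblk b) ≃o {x // x ∈ Finset.univ.filter fun k => P.π k = b} :=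
  (Finset.univ.filter fun k => P.π k = b).orderIsoOfFin rfl

/-- `m^{[b]}`, the row bounds of block `b` -/
def mblk (m : Fin r → ℕ) (b : Fin g) : Fin (P.rblk b) → ℕ :=
  fun i => m ((P.blkEquiv b i : {x // x ∈ Finset.univ.filter fun k => P.π k = b}) : Fin r)

/-- the block component `μ^{[b]}` of a multicomposition, an `r_b`-multicomposition
of `n_b = α_p(μ)_b` -/
def restrictTo (mu : MultiComp n r m) (b : Fin g) (nb : ℕ)
    (h : P.alphaP mu b = nb) : MultiComp nb (P.rblk b) (P.mblk m b) where
  part := fun k i => mu.part ((P.blkEquiv b k :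
    {x // x ∈ Finset.univ.filter fun k => P.π k = b}) : Fin r) i
  sum_eq := by
    subst h
    calc (∑ k : Fin (P.rblk b), ∑ i, mu.part ((P.blkEquiv b k :
            {x // x ∈ Finset.univ.filter fun k => P.π k = b}) : Fin r) i)
        = ∑ x : {x // x ∈ Finset.univ.filter fun k => P.π k = b},
            mu.compSize (x : Fin r) :=
          Fintype.sum_equiv (P.blkEquiv b).toEquiv _ _ (fun _ => rfl)
      _ = ∑ k ∈ Finset.univ.filter fun k => P.π k = b, mu.compSize k :=
          Finset.sum_coe_sort _ _
      _ = P.alphaP mu b := rfl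

theorem restrictTo_isPartition (mu : MultiComp n r m) (hmu : mu.IsPartition)
    (b : Fin g) (nb : ℕ) (h : P.alphaP mu b = nb) :
    (P.restrictTo mu b nb h).IsPartition :=
  fun k i j hij => hmu _ i j hij

/-- the largest component index in block `b` (that is, `p_b + r_b`) -/
def blockLast (b : Fin g) : Fin r :=
  (Finset.univ.filter fun k => P.π k = b).max' (by
    obtain ⟨k, hk⟩ := P.surj b
    exact ⟨k, Finset.mem_filter.2 ⟨Finset.mem_univ _, hk⟩⟩)

end BlockCtx
/-! ## The cyclotomic q-Schur algebra with its Dipper–James–Mathas cellular basis -/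

/-- the multicompositions belonging to `Λ` -/
abbrev LamS {n r : ℕ} {m : Fin r → ℕ} (Λ : Finset (MultiComp n r m)) := {x // x ∈ Λ}

/-- `Λ⁺`, the multipartitions belonging to `Λ` -/
abbrev LamP {n r : ℕ} {m : Fin r → ℕ} (Λ : Finset (MultiComp n r m)) :=
  {x : MultiComp n r m // x ∈ Λ ∧ x.IsPartition}

/-- the index set of the Dipper–James–Mathas cellular basis
`{φ_{S,T} : S ∈ T₀(λ,μ), T ∈ T₀(λ,ν), λ ∈ Λ⁺, μ, ν ∈ Λ}` -/
abbrev DJMIndex {n r : ℕ} {m : Fin r → ℕ} (Λ : Finset (MultiComp n r m)) :=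
  Σ (lam : LamP Λ) (mu : LamS Λ) (nu : LamS Λ), SSTab lam.1 mu.1 × SSTab lam.1 nu.1

/-- Abstract datum of the cyclotomic q-Schur algebra `S(Λ) = End_H(⊕_{μ∈Λ} M^μ)`
together with its Dipper–James–Mathas cellular basis `φ_{S,T}`
(`bas ⟨λ, μ, ν, (S, T)⟩` is the basis element `φ_{S,T} ∈ Hom_H(M^ν, M^μ)` for
`S ∈ T₀(λ,μ)`, `T ∈ T₀(λ,ν)`), with its cellular anti-automorphism `*`
(`astar`), and the orthogonal idempotents `φ_μ = id_{M^μ}` (`phiId`). -/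
structure SchurAlgebra (R : Type) [CommRing R] {n r : ℕ} {m : Fin r → ℕ}
    (Λ : Finset (MultiComp n r m)) where
  carrier : Type
  [ringI : Ring carrier]
  [algI : Algebra R carrier]
  bas : Module.Basis (DJMIndex Λ) R carrier
  astar : carrier →ₗ[R] carrier
  astar_mul : ∀ x y : carrier, astar (x * y) = astar y * astar x
  astar_bas : ∀ (lam : LamP Λ) (mu nu : LamS Λ)
    (S : SSTab lam.1 mu.1) (T : SSTab lam.1 nu.1),
    astar (bas ⟨lam, mu, nu, (S, T)⟩) = bas ⟨lam, nu, mu, (T, S)⟩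
  phiId : LamS Λ → carrier
  phiId_sum : ∑ mu : LamS Λ, phiId mu = 1
  phiId_mul : ∀ mu nu : LamS Λ, phiId mu * phiId nu = if mu = nu then phiId mu else 0
  phiId_mul_bas : ∀ (lam : LamP Λ) (mu nu : LamS Λ) (S : SSTab lam.1 mu.1)
    (T : SSTab lam.1 nu.1) (rho : LamS Λ),
    phiId rho * bas ⟨lam, mu, nu, (S, T)⟩ =
      if rho = mu then bas ⟨lam, mu, nu, (S, T)⟩ else 0
  bas_mul_phiId : ∀ (lam : LamP Λ) (mu nu : LamS Λ) (S : SSTab lam.1 mu.1)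
    (T : SSTab lam.1 nu.1) (rho : LamS Λ),
    bas ⟨lam, mu, nu, (S, T)⟩ * phiId rho =
      if rho = nu then bas ⟨lam, mu, nu, (S, T)⟩ else 0
  cellular : ∀ (a : carrier) (lam : LamP Λ) (mu : LamS Λ) (S : SSTab lam.1 mu.1),
    ∃ c : (Σ mu' : LamS Λ, SSTab lam.1 mu'.1) → R,
      ∀ (nu : LamS Λ) (T : SSTab lam.1 nu.1),
        a * bas ⟨lam, mu, nu, (S, T)⟩ -
            ∑ x : Σ mu' : LamS Λ, SSTab lam.1 mu'.1,
              c x • bas ⟨lam, x.1, nu, (x.2, T)⟩ ∈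
          Submodule.span R
            {y : carrier | ∃ (lam' : LamP Λ) (mu' nu' : LamS Λ)
              (S' : SSTab lam'.1 mu'.1) (T' : SSTab lam'.1 nu'.1),
              MultiComp.SDominates lam'.1 lam.1 ∧
              y = bas ⟨lam', mu', nu', (S', T')⟩}

namespace SchurAlgebra

variable {R : Type} [CommRing R] {n r : ℕ} {m : Fin r → ℕ}
variable {Λ : Finset (MultiComp n r m)}

instance (SA : SchurAlgebra R Λ) : Ring SA.carrier := SA.ringI
instance (SA : SchurAlgebra R Λ) : Algebra R SA.carrier := SA.algI

/-- the two-sided ideal `S(Λ)^{∨λ}`, spanned by the `φ_{S,T}` of shape strictly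
dominating `λ` -/
def SVee (SA : SchurAlgebra R Λ) (lam : LamP Λ) : Submodule R SA.carrier :=
  Submodule.span R
    {y : SA.carrier | ∃ (lam' : LamP Λ) (mu' nu' : LamS Λ)
      (S' : SSTab lam'.1 mu'.1) (T' : SSTab lam'.1 nu'.1),
      MultiComp.SDominates lam'.1 lam.1 ∧ y = SA.bas ⟨lam', mu', nu', (S', T')⟩}

end SchurAlgebra

/-! ## The parabolic subalgebra `S^p` and its combinatorics -/

section PLayer

variable {R : Type} [CommRing R] {n r g : ℕ} {m : Fin r → ℕ}
variable {Λ : Finset (MultiComp n r m)}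

/-- a semistandard tableau of shape `λ` together with its type `μ`,
i.e. an element of `T₀(λ) = ⋃_{μ ∈ Λ} T₀(λ,μ)` -/
abbrev TabOf (Λ : Finset (MultiComp n r m)) (lam : LamP Λ) :=
  Σ mu : LamS Λ, SSTab lam.1 mu.1

/-- the condition defining `T₀^p(λ,μ) ⊆ T₀(λ,μ)`: `a_p(λ) = a_p(μ)` -/
def pCond (P : BlockCtx r g) (lam : LamP Λ) (x : TabOf Λ lam) : Prop :=
  P.aP x.1.1 = P.aP lam.1

instance (P : BlockCtx r g) (lam : LamP Λ) (x : TabOf Λ lam) :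
    Decidable (pCond P lam x) := by
  unfold pCond; infer_instance

/-- `T₀^p(λ)`, the tableaux whose type has the same `a_p` as the shape -/
abbrev PTab (P : BlockCtx r g) (lam : LamP Λ) := {x : TabOf Λ lam // pCond P lam x}

/-- `x` is the canonical tableau `T^λ = λ(t^λ)` of shape and type `λ` -/
def IsCanonical (lam : LamP Λ) (x : TabOf Λ lam) : Prop :=
  x.1.1 = lam.1 ∧ ∀ c : lam.1.Cell, x.2.entry c = ⟨c.1, c.2.1⟩

namespace SchurAlgebra

/-- the subset `Z^p` of the cellular basis: those `φ_{S,T}` with `S ∈ T₀(λ,μ)`,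
`T ∈ T₀(λ,ν)` such that `a_p(λ) > a_p(μ)` whenever `α_p(μ) ≠ α_p(ν)` -/
def ZpSet (SA : SchurAlgebra R Λ) (P : BlockCtx r g) : Set SA.carrier :=
  {x | ∃ (lam : LamP Λ) (mu nu : LamS Λ) (S : SSTab lam.1 mu.1) (T : SSTab lam.1 nu.1),
    (P.alphaP mu.1 ≠ P.alphaP nu.1 → vecLT (P.aP mu.1) (P.aP lam.1)) ∧
    x = SA.bas ⟨lam, mu, nu, (S, T)⟩}

/-- the subset `Z^p \ {φ_{S,T} : S, T ∈ T₀^p(λ)}` spanning the two-sided ideal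
`\hat S^p` of `S^p` -/
def ZpHatSet (SA : SchurAlgebra R Λ) (P : BlockCtx r g) : Set SA.carrier :=
  {x | ∃ (lam : LamP Λ) (mu nu : LamS Λ) (S : SSTab lam.1 mu.1) (T : SSTab lam.1 nu.1),
    (P.alphaP mu.1 ≠ P.alphaP nu.1 → vecLT (P.aP mu.1) (P.aP lam.1)) ∧
    ¬(P.aP mu.1 = P.aP lam.1 ∧ P.aP nu.1 = P.aP lam.1) ∧
    x = SA.bas ⟨lam, mu, nu, (S, T)⟩}

end SchurAlgebra

/-- the index set `Σ^p ⊆ Λ⁺ × {0,1}`, where `(λ,1)` is kept only if there exists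
`μ ∈ Λ` with `a_p(λ) > a_p(μ)` and `T₀(λ,μ) ≠ ∅` -/
def SigmaPIdx (Λ : Finset (MultiComp n r m)) (P : BlockCtx r g) :=
  {e : LamP Λ × Bool // e.2 = true →
    ∃ mu : LamS Λ, vecLT (P.aP mu.1) (P.aP e.1.1) ∧ Nonempty (SSTab e.1.1 mu.1)}

/-- the partial order on `Σ^p`: `(λ₁,ε₁) > (λ₂,ε₂)` iff `λ₁ ⊳ λ₂`, or `λ₁ = λ₂`
and `ε₁ > ε₂` -/
def sigmaGT (P : BlockCtx r g) (e f : SigmaPIdx Λ P) : Prop :=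
  MultiComp.SDominates e.1.1.1 f.1.1.1 ∨
    (e.1.1 = f.1.1 ∧ e.1.2 = true ∧ f.1.2 = false)

/-- the element `(λ, 0)` of `Σ^p` -/
def eZero (P : BlockCtx r g) (lam : LamP Λ) : SigmaPIdx Λ P :=
  ⟨(lam, false), fun h => (Bool.false_ne_true h).elim⟩

/-- the index set `I^p(ε)`: `T₀^p(λ)` for `ε = (λ,0)`, and
`⋃ {T₀(λ,μ) : a_p(λ) > a_p(μ)}` for `ε = (λ,1)` -/
def pIp (P : BlockCtx r g) (e : SigmaPIdx Λ P) : Set (TabOf Λ e.1.1) :=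
  {x | (e.1.2 = true ∧ vecLT (P.aP x.1.1) (P.aP e.1.1.1)) ∨
       (e.1.2 = false ∧ pCond P e.1.1 x)}

/-- the index set `J^p(ε)`: `T₀^p(λ)` for `ε = (λ,0)`, and `T₀(λ)` for `ε = (λ,1)` -/
def pJp (P : BlockCtx r g) (e : SigmaPIdx Λ P) : Set (TabOf Λ e.1.1) :=
  {x | e.1.2 = true ∨ pCond P e.1.1 x}

instance (P : BlockCtx r g) (e : SigmaPIdx Λ P) :
    DecidablePred (· ∈ pIp (Λ := Λ) P e) := fun x =>
  decidable_of_iff ((e.1.2 = true ∧ vecLT (P.aP x.1.1) (P.aP e.1.1.1)) ∨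
    (e.1.2 = false ∧ pCond P e.1.1 x)) Iff.rfl

instance (P : BlockCtx r g) (e : SigmaPIdx Λ P) :
    DecidablePred (· ∈ pJp (Λ := Λ) P e) := fun x =>
  decidable_of_iff (e.1.2 = true ∨ pCond P e.1.1 x) Iff.rfl

namespace SchurAlgebra

/-- the set `Z^p(ε) = {φ_{S,T} : S ∈ I^p(ε), T ∈ J^p(ε)}` -/
def ZpAt (SA : SchurAlgebra R Λ) (P : BlockCtx r g) (e : SigmaPIdx Λ P) :
    Set SA.carrier :=
  {x | ∃ S ∈ pIp P e, ∃ T ∈ pJp P e, x = SA.bas ⟨e.1.1, S.1, T.1, (S.2, T.2)⟩}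

/-- the ideal `(S^p)^{∨ε}`, spanned by the `Z^p(ε')` for `ε' > ε` -/
def SpVee (SA : SchurAlgebra R Λ) (P : BlockCtx r g) (e : SigmaPIdx Λ P) :
    Submodule R SA.carrier :=
  Submodule.span R (⋃ e' : {f : SigmaPIdx Λ P // sigmaGT P f e}, SA.ZpAt P e'.1)

end SchurAlgebra

end PLayer
/-! ## Based right modules and composition multiplicities -/

/-- a right `A`-module which is free as an `R`-module with a distinguished basis
indexed by `ι`; right `A`-modules are treated as left `Aᵐᵒᵖ`-modules -/
structure BasedRightModule (R : Type) [CommRing R] (A : Type) [Ring A]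
    [Algebra R A] (ι : Type) where
  M : Type
  [abGrp : AddCommGroup M]
  [modR : Module R M]
  [modA : Module Aᵐᵒᵖ M]
  [tower : IsScalarTower R Aᵐᵒᵖ M]
  bas : Module.Basis ι R M

namespace BasedRightModule

variable {R : Type} [CommRing R] {A : Type} [Ring A] [Algebra R A] {ι : Type}

instance (X : BasedRightModule R A ι) : AddCommGroup X.M := X.abGrp
instance (X : BasedRightModule R A ι) : Module R X.M := X.modR
instance (X : BasedRightModule R A ι) : Module Aᵐᵒᵖ X.M := X.modA
instance (X : BasedRightModule R A ι) : IsScalarTower R Aᵐᵒᵖ X.M := X.tower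

end BasedRightModule

/-- `N` is the radical of the bilinear form on the based module `X` whose Gram
matrix in the distinguished basis is `f` -/
def IsFormRadical {R : Type} [CommRing R] {A : Type} [Ring A] [Algebra R A]
    {ι : Type} [Fintype ι] (X : BasedRightModule R A ι) (f : ι → ι → R)
    (N : Submodule Aᵐᵒᵖ X.M) : Prop :=
  ∀ x : X.M, x ∈ N ↔ ∀ t : ι, (∑ s : ι, X.bas.repr x s * f s t) = 0

open Classical in
/-- the number of factors of the composition series `s` isomorphic to `L`: the
multiplicity `[M : L]` when `s` runs from `⊥` to `⊤` -/
noncomputable def factorMult {A : Type} [Ring A] {M : Type} [AddCommGroup M]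
    [Module A M] (s : CompositionSeries (Submodule A M)) (L : Type)
    [AddCommGroup L] [Module A L] : ℕ :=
  (Finset.univ.filter fun i : Fin s.length =>
    Nonempty ((↥(s i.succ) ⧸ Submodule.comap (s i.succ).subtype (s i.castSucc))
      ≃ₗ[A] L)).card

/-- a composition series of the full module: from `⊥` to `⊤` -/
def IsFullSeries {A : Type} [Ring A] {M : Type} [AddCommGroup M] [Module A M]
    (s : CompositionSeries (Submodule A M)) : Prop :=
  s.head = ⊥ ∧ s.last = ⊤
/-! ## The quotient algebra `\bar S^p` -/

section BarLayer

variable {R : Type} [CommRing R] {n r g : ℕ} {m : Fin r → ℕ}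
variable {Λ : Finset (MultiComp n r m)}

/-- Abstract datum of the quotient algebra `\bar S^p = S^p / \hat S^p`:
an `R`-algebra `B` together with the surjective projection `proj : S^p → B`,
whose kernel is the span of `Z^p \ {φ_{S,T} : S, T ∈ T₀^p(λ)}`, and the images
`\barφ_{S,T}` (`barphi`) of the basis elements, which form an `R`-basis of `B`. -/
structure BarSchurAlgebra {R : Type} [CommRing R] {n r : ℕ} {m : Fin r → ℕ}
    {Λ : Finset (MultiComp n r m)} {g : ℕ} (SA : SchurAlgebra R Λ)
    (P : BlockCtx r g) (Sp : Subalgebra R SA.carrier) where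
  B : Type
  [ringB : Ring B]
  [algB : Algebra R B]
  proj : ↥Sp →ₐ[R] B
  surj : Function.Surjective proj
  barphi : (lam : LamP Λ) → PTab P lam → PTab P lam → B
  bbas : Module.Basis (Σ lam : LamP Λ, PTab P lam × PTab P lam) R B
  bbas_eq : ∀ (lam : LamP Λ) (S T : PTab P lam), bbas ⟨lam, (S, T)⟩ = barphi lam S T
  proj_bas : ∀ (lam : LamP Λ) (mu nu : LamS Λ) (S : SSTab lam.1 mu.1)
    (T : SSTab lam.1 nu.1) (x : ↥Sp),
    (x : SA.carrier) = SA.bas ⟨lam, mu, nu, (S, T)⟩ →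
    proj x = if h : pCond P lam ⟨mu, S⟩ ∧ pCond P lam ⟨nu, T⟩
      then barphi lam ⟨⟨mu, S⟩, h.1⟩ ⟨⟨nu, T⟩, h.2⟩ else 0
  ker_char : ∀ x : ↥Sp, proj x = 0 ↔ (x : SA.carrier) ∈
    Submodule.span R (SA.ZpHatSet P)

namespace BarSchurAlgebra

variable {SA : SchurAlgebra R Λ} {P : BlockCtx r g} {Sp : Subalgebra R SA.carrier}

instance (BA : BarSchurAlgebra SA P Sp) : Ring BA.B := BA.ringB
instance (BA : BarSchurAlgebra SA P Sp) : Algebra R BA.B := BA.algB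

/-- the two-sided ideal `(\bar S^p)^{∨λ}`, spanned by the `\barφ_{S,T}` of shape
strictly dominating `λ` -/
def BarVee (BA : BarSchurAlgebra SA P Sp) (lam : LamP Λ) : Submodule R BA.B :=
  Submodule.span R {y : BA.B | ∃ (lam' : LamP Λ) (S T : PTab P lam'),
    MultiComp.SDominates lam'.1 lam.1 ∧ y = BA.barphi lam' S T}

end BarSchurAlgebra

/-! ## Characterizations of the various Weyl modules -/

namespace SchurAlgebra

/-- `W` is the Weyl module `W^λ` of `S(Λ)`: its basis `{φ_T}` is indexed by
`T₀(λ)` and the right action is the one inherited from multiplication in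
`S(Λ)` modulo `S(Λ)^{∨λ}`. -/
def IsWeylModule (SA : SchurAlgebra R Λ) (lam : LamP Λ)
    (W : BasedRightModule R SA.carrier (TabOf Λ lam)) : Prop :=
  ∀ (S T : TabOf Λ lam) (a : SA.carrier),
    SA.bas ⟨lam, S.1, T.1, (S.2, T.2)⟩ * a -
        ∑ T' : TabOf Λ lam, (W.bas.repr (MulOpposite.op a • W.bas T) T') •
          SA.bas ⟨lam, S.1, T'.1, (S.2, T'.2)⟩ ∈ SA.SVee lam

/-- `f` is the canonical bilinear form of the Weyl module `W^λ`, determined by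
`φ_{T^λ,S} φ_{T,T^λ} ≡ ⟨φ_S, φ_T⟩ φ_{T^λ,T^λ} mod S(Λ)^{∨λ}`; here `tc` is the
canonical tableau `T^λ`. -/
def IsWeylForm (SA : SchurAlgebra R Λ) (lam : LamP Λ) (tc : TabOf Λ lam)
    (f : TabOf Λ lam → TabOf Λ lam → R) : Prop :=
  ∀ S T : TabOf Λ lam,
    SA.bas ⟨lam, tc.1, S.1, (tc.2, S.2)⟩ * SA.bas ⟨lam, T.1, tc.1, (T.2, tc.2)⟩ -
      f S T • SA.bas ⟨lam, tc.1, tc.1, (tc.2, tc.2)⟩ ∈ SA.SVee lam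

/-- `Z` is the standard right `S^p`-module `Z_p^ε` attached to `ε ∈ Σ^p`: its
basis `{φ_T^ε}` is indexed by `J^p(ε)` and the right `S^p`-action is inherited
from multiplication in `S^p` modulo `(S^p)^{∨ε}`. -/
def IsZpModule (SA : SchurAlgebra R Λ) (P : BlockCtx r g)
    (Sp : Subalgebra R SA.carrier) (e : SigmaPIdx Λ P)
    (Z : BasedRightModule R ↥Sp {x : TabOf Λ e.1.1 // x ∈ pJp P e}) : Prop :=
  ∀ (S : {x : TabOf Λ e.1.1 // x ∈ pIp P e})
    (T : {x : TabOf Λ e.1.1 // x ∈ pJp P e}) (a : ↥Sp),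
    SA.bas ⟨e.1.1, S.1.1, T.1.1, (S.1.2, T.1.2)⟩ * (a : SA.carrier) -
        ∑ T' : {x : TabOf Λ e.1.1 // x ∈ pJp P e},
          (Z.bas.repr (MulOpposite.op a • Z.bas T) T') •
            SA.bas ⟨e.1.1, S.1.1, T'.1.1, (S.1.2, T'.1.2)⟩ ∈ SA.SpVee P e

/-- `f` is the canonical bilinear pairing `β_ε` between `◇Z_p^ε` and `Z_p^ε`,
determined by `φ_{U,T} φ_{S,V} ≡ β_ε(φ_S^ε, φ_T^ε) φ_{U,V} mod (S^p)^{∨ε}`. -/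
def IsBetaForm (SA : SchurAlgebra R Λ) (P : BlockCtx r g) (e : SigmaPIdx Λ P)
    (f : {x : TabOf Λ e.1.1 // x ∈ pIp P e} →
      {x : TabOf Λ e.1.1 // x ∈ pJp P e} → R) : Prop :=
  ∀ (U : {x : TabOf Λ e.1.1 // x ∈ pIp P e})
    (T : {x : TabOf Λ e.1.1 // x ∈ pJp P e})
    (S : {x : TabOf Λ e.1.1 // x ∈ pIp P e})
    (V : {x : TabOf Λ e.1.1 // x ∈ pJp P e}),
    SA.bas ⟨e.1.1, U.1.1, T.1.1, (U.1.2, T.1.2)⟩ *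
        SA.bas ⟨e.1.1, S.1.1, V.1.1, (S.1.2, V.1.2)⟩ -
      f S T • SA.bas ⟨e.1.1, U.1.1, V.1.1, (U.1.2, V.1.2)⟩ ∈ SA.SpVee P e

/-- `N` is the radical `rad Z_p^ε` of the pairing `β_ε` (with Gram matrix `f`). -/
def IsBetaRadical (SA : SchurAlgebra R Λ) (P : BlockCtx r g)
    (Sp : Subalgebra R SA.carrier) (e : SigmaPIdx Λ P)
    (Z : BasedRightModule R ↥Sp {x : TabOf Λ e.1.1 // x ∈ pJp P e})
    (f : {x : TabOf Λ e.1.1 // x ∈ pIp P e} →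
      {x : TabOf Λ e.1.1 // x ∈ pJp P e} → R)
    (N : Submodule (↥Sp)ᵐᵒᵖ Z.M) : Prop :=
  ∀ y : Z.M, y ∈ N ↔ ∀ S : {x : TabOf Λ e.1.1 // x ∈ pIp P e},
    (∑ T : {x : TabOf Λ e.1.1 // x ∈ pJp P e}, Z.bas.repr y T * f S T) = 0

end SchurAlgebra

namespace BarSchurAlgebra

variable {SA : SchurAlgebra R Λ} {P : BlockCtx r g} {Sp : Subalgebra R SA.carrier}

/-- `Z` is the Weyl (cell) module `\bar Z_p^λ` of the cellular algebra `\bar S^p`: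
its basis `{\barφ_T}` is indexed by `T₀^p(λ)` and the right action is inherited
from multiplication in `\bar S^p` modulo `(\bar S^p)^{∨λ}`. -/
def IsBarWeyl (BA : BarSchurAlgebra SA P Sp) (lam : LamP Λ)
    (Z : BasedRightModule R BA.B (PTab P lam)) : Prop :=
  ∀ (S T : PTab P lam) (b : BA.B),
    BA.barphi lam S T * b - ∑ T' : PTab P lam,
        (Z.bas.repr (MulOpposite.op b • Z.bas T) T') • BA.barphi lam S T' ∈
      BA.BarVee lam

/-- `f` is the canonical symmetric bilinear form `⟨·,·⟩_p` on `\bar Z_p^λ`,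
determined by `\barφ_{T^λ,S} \barφ_{T,T^λ} ≡ ⟨\barφ_S, \barφ_T⟩_p \barφ_{T^λ,T^λ}
mod (\bar S^p)^{∨λ}`; `tc` is the canonical tableau `T^λ`. -/
def IsBarForm (BA : BarSchurAlgebra SA P Sp) (lam : LamP Λ) (tc : PTab P lam)
    (f : PTab P lam → PTab P lam → R) : Prop :=
  ∀ S T : PTab P lam,
    BA.barphi lam tc S * BA.barphi lam T tc - f S T • BA.barphi lam tc tc ∈
      BA.BarVee lam

end BarSchurAlgebra

end BarLayer
/-! ## The Ariki–Koike algebra -/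

/-- the defining relations of the Ariki–Koike algebra `H_{n,r}` on the generators
`T_0, T_1, …, T_{n-1}` (generator `i : Fin n` is `T_i`) -/
inductive ArikiKoikeRel (R : Type) [CommRing R] (n r : ℕ) (q : Rˣ) (Q : Fin r → R) :
    FreeAlgebra R (Fin n) → FreeAlgebra R (Fin n) → Prop
  | cyclotomic (h : 0 < n) :
      ArikiKoikeRel R n r q Q
        (((List.finRange r).map fun j =>
          FreeAlgebra.ι R (⟨0, h⟩ : Fin n) - algebraMap R _ (Q j)).prod) 0
  | quadratic (i : Fin n) (hi : i.1 ≠ 0) :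
      ArikiKoikeRel R n r q Q
        ((FreeAlgebra.ι R i - algebraMap R _ (q : R)) *
          (FreeAlgebra.ι R i + algebraMap R _ ((q⁻¹ : Rˣ) : R))) 0
  | braid0 (h : 1 < n) :
      ArikiKoikeRel R n r q Q
        (FreeAlgebra.ι R (⟨0, Nat.lt_of_lt_of_le Nat.zero_lt_one h.le⟩ : Fin n) *
          FreeAlgebra.ι R (⟨1, h⟩ : Fin n) *
          FreeAlgebra.ι R (⟨0, Nat.lt_of_lt_of_le Nat.zero_lt_one h.le⟩ : Fin n) *
          FreeAlgebra.ι R (⟨1, h⟩ : Fin n))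
        (FreeAlgebra.ι R (⟨1, h⟩ : Fin n) *
          FreeAlgebra.ι R (⟨0, Nat.lt_of_lt_of_le Nat.zero_lt_one h.le⟩ : Fin n) *
          FreeAlgebra.ι R (⟨1, h⟩ : Fin n) *
          FreeAlgebra.ι R (⟨0, Nat.lt_of_lt_of_le Nat.zero_lt_one h.le⟩ : Fin n))
  | braid (i j : Fin n) (hi : i.1 ≠ 0) (hij : j.1 = i.1 + 1) :
      ArikiKoikeRel R n r q Q
        (FreeAlgebra.ι R i * FreeAlgebra.ι R j * FreeAlgebra.ι R i)
        (FreeAlgebra.ι R j * FreeAlgebra.ι R i * FreeAlgebra.ι R j)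
  | comm (i j : Fin n) (hij : i.1 + 1 < j.1) :
      ArikiKoikeRel R n r q Q
        (FreeAlgebra.ι R i * FreeAlgebra.ι R j)
        (FreeAlgebra.ι R j * FreeAlgebra.ι R i)

/-- the Ariki–Koike algebra `H_{n,r}` over `R` with parameters
`q, Q_1, …, Q_r` (with `q` invertible) -/
abbrev ArikiKoike (R : Type) [CommRing R] (n r : ℕ) (q : Rˣ) (Q : Fin r → R) :=
  RingQuot (ArikiKoikeRel R n r q Q)

/-! ## Corners `e·B·e` at an idempotent -/

/-- an idempotent element of a ring -/
structure IdemElem (B : Type) [Ring B] where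
  e : B
  idem : e * e = e

/-- the corner `{x : B | e x e = x}` of `B` at the idempotent `e`;
for `e = \barφ_Ω` this is the modified Ariki–Koike algebra
`\bar H^p = \barφ_Ω ⬝ \bar S^p ⬝ \barφ_Ω` of type `p` -/
def Corner {B : Type} [Ring B] (E : IdemElem B) := {x : B // E.e * x * E.e = x}

namespace Corner

variable {B : Type} [Ring B] {E : IdemElem B}

instance : Add (Corner E) :=
  ⟨fun x y => ⟨x.1 + y.1, by rw [mul_add, add_mul, x.2, y.2]⟩⟩

instance : Mul (Corner E) :=
  ⟨fun x y => ⟨x.1 * y.1, by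
    have hx : E.e * x.1 = x.1 := by
      nth_rewrite 1 [← x.2]
      rw [← mul_assoc, ← mul_assoc, E.idem, x.2]
    have hy : y.1 * E.e = y.1 := by
      nth_rewrite 1 [← y.2]
      rw [mul_assoc, E.idem, y.2]
    rw [← mul_assoc, hx, mul_assoc, hy]⟩⟩

instance : Zero (Corner E) := ⟨⟨0, by simp⟩⟩

instance : Neg (Corner E) := ⟨fun x => ⟨-x.1, by rw [mul_neg, neg_mul, x.2]⟩⟩

/-- the identity element `e` of the corner -/
def one (E : IdemElem B) : Corner E :=
  ⟨E.e, by rw [E.idem, E.idem]⟩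

instance {R : Type} [CommRing R] [Algebra R B] : SMul R (Corner E) :=
  ⟨fun c x => ⟨c • x.1, by rw [mul_smul_comm, smul_mul_assoc, x.2]⟩⟩

@[simp] theorem add_val (x y : Corner E) : (x + y).1 = x.1 + y.1 := rfl
@[simp] theorem mul_val (x y : Corner E) : (x * y).1 = x.1 * y.1 := rfl
@[simp] theorem smul_val {R : Type} [CommRing R] [Algebra R B] (c : R)
    (x : Corner E) : (c • x).1 = c • x.1 := rfl

end Corner

/-! ## The set `Ω` and the blocks of compositions of `n` -/

section OmegaLayer

variable {n r g : ℕ} {m : Fin r → ℕ}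

/-- `ω ∈ Ω`: all the entries of `ω` are `0` or `1`, for each letter
`1 ≤ i ≤ n` the `i`-th rows of the components of `ω` have total size `1`,
and all nonzero rows occur in components which are last in their `p`-block
(this uses `m_k ≥ n` for all `k`). -/
def IsOmega (P : BlockCtx r g) (hm : ∀ k, n ≤ m k) (om : MultiComp n r m) : Prop :=
  (∀ (k : Fin r) (i : Fin (m k)), om.part k i ≤ 1) ∧
  (∀ i : Fin n,
    (∑ k : Fin r, om.part k ⟨i.1, Nat.lt_of_lt_of_le i.2 (hm k)⟩) = 1) ∧
  (∀ (k : Fin r) (i : Fin (m k)), om.part k i = 1 →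
    ∀ k' : Fin r, P.π k' = P.π k → k' ≤ k)

instance (P : BlockCtx r g) (hm : ∀ k, n ≤ m k) (om : MultiComp n r m) :
    Decidable (IsOmega P hm om) := by
  unfold IsOmega; infer_instance

/-- the set `D_{n,g}` of tuples `(n₁, …, n_g)` of non-negative integers summing
to `n` -/
def DComp (n g : ℕ) := {f : Fin g → ℕ // ∑ b, f b = n}

end OmegaLayer

/-! ## Auxiliary lemmas for Statement 0 -/

section AuxComb

variable {n r g : ℕ} {m : Fin r → ℕ}

namespace BlockCtx

variable (P : BlockCtx r g)

lemma sum_alphaP (mu : MultiComp n r m) : ∑ b, P.alphaP mu b = n := by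
  unfold alphaP
  rw [Finset.sum_fiberwise Finset.univ P.π (fun k => mu.compSize k)]
  unfold MultiComp.compSize
  exact mu.sum_eq

lemma aP_eq_sum_alphaP (mu : MultiComp n r m) (b : Fin g) :
    P.aP mu b = ∑ b' ∈ Finset.univ.filter (· < b), P.alphaP mu b' := by
  unfold aP alphaP
  rw [← Finset.sum_fiberwise_of_maps_to (g := P.π)
      (t := Finset.univ.filter (· < b))
      (fun k hk => by
        simp only [Finset.mem_filter, Finset.mem_univ, true_and] at hk ⊢
        exact hk)
      (fun k => mu.compSize k)]
  refine Finset.sum_congr rfl fun b' hb' => ?_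
  have hb'lt : b' < b := by
    simpa using hb'
  congr 1
  ext k
  simp only [Finset.mem_filter, Finset.mem_univ, true_and]
  constructor
  · rintro ⟨-, h⟩; exact h
  · intro h; exact ⟨h ▸ hb'lt, h⟩

lemma aP_eq_of_alphaP_eq {mu nu : MultiComp n r m}
    (h : P.alphaP mu = P.alphaP nu) : P.aP mu = P.aP nu := by
  funext b
  rw [aP_eq_sum_alphaP, aP_eq_sum_alphaP, h]

lemma alphaP_eq_of_aP_eq {mu nu : MultiComp n r m} (h : P.aP mu = P.aP nu) :
    P.alphaP mu = P.alphaP nu := by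
  funext b
  have key : ∀ rho : MultiComp n r m, P.alphaP rho b + P.aP rho b
      = ∑ b' ∈ Finset.univ.filter (· ≤ b), P.alphaP rho b' := by
    intro rho
    rw [aP_eq_sum_alphaP]
    have hins : Finset.univ.filter (· ≤ b) = insert b (Finset.univ.filter (· < b)) := by
      ext b'
      simp [le_iff_lt_or_eq, or_comm]
    rw [hins, Finset.sum_insert (by simp)]
  have hG : (∑ b' ∈ Finset.univ.filter (· ≤ b), P.alphaP mu b')
      = ∑ b' ∈ Finset.univ.filter (· ≤ b), P.alphaP nu b' := by
    by_cases hb : b.1 + 1 < g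
    · have hfil : Finset.univ.filter (· ≤ b)
          = Finset.univ.filter (· < (⟨b.1 + 1, hb⟩ : Fin g)) := by
        ext b'
        simp only [Finset.mem_filter, Finset.mem_univ, true_and, Fin.le_def, Fin.lt_def]
        omega
      rw [hfil, ← aP_eq_sum_alphaP, ← aP_eq_sum_alphaP, h]
    · have hfil : Finset.univ.filter (· ≤ b) = Finset.univ := by
        ext b'
        simp only [Finset.mem_filter, Finset.mem_univ, true_and, iff_true]
        have h1 := b'.2
        have h2 := b.2
        exact Fin.le_def.2 (by omega)
      rw [hfil, sum_alphaP, sum_alphaP]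
  have e1 := key mu
  have e2 := key nu
  have e3 : P.aP mu b = P.aP nu b := by rw [h]
  omega

lemma aP_le_of_sstab {lam mu : MultiComp n r m} (T : SSTab lam mu) :
    vecLE (P.aP mu) (P.aP lam) := by
  intro b
  have hcard : ∀ e : MCEntry r m, mu.part e.1 e.2
      = (Finset.univ.filter fun c : lam.Cell => T.entry c = e).card := by
    intro e
    rw [T.typeCount e, Fintype.card_subtype]
  have hmu : P.aP mu b
      = Fintype.card {c : lam.Cell // P.π (T.entry c).1 < b} := by
    calc P.aP mu b
        = ∑ k ∈ Finset.univ.filter (fun k => P.π k < b), ∑ i, mu.part k i := rfl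
      _ = ∑ e ∈ (Finset.univ.filter fun e : MCEntry r m => P.π e.1 < b),
            (Finset.univ.filter fun c : lam.Cell => T.entry c = e).card := by
          rw [show (Finset.univ.filter fun e : MCEntry r m => P.π e.1 < b)
              = (Finset.univ.filter fun k => P.π k < b).sigma
                  (fun _ => Finset.univ) from by
            ext ⟨k, i⟩
            simp [Finset.mem_sigma]]
          rw [Finset.sum_sigma]
          exact Finset.sum_congr rfl fun k _ =>
            Finset.sum_congr rfl fun i _ => hcard ⟨k, i⟩
      _ = (Finset.univ.filter fun c : lam.Cell => P.π (T.entry c).1 < b).card := by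
          rw [Finset.card_eq_sum_card_fiberwise
              (f := fun c : lam.Cell => T.entry c)
              (t := Finset.univ.filter fun e : MCEntry r m => P.π e.1 < b)
              (fun c hc => by
                simp only [Finset.mem_coe, Finset.mem_filter, Finset.mem_univ, true_and] at hc ⊢
                exact hc)]
          refine Finset.sum_congr rfl fun e he => ?_
          simp only [Finset.mem_filter, Finset.mem_univ, true_and] at he
          congr 1
          ext c
          simp only [Finset.mem_filter, Finset.mem_univ, true_and]
          constructor
          · intro hc
            exact ⟨by rw [hc]; exact he, hc⟩
          · rintro ⟨-, hc⟩; exact hc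
      _ = Fintype.card {c : lam.Cell // P.π (T.entry c).1 < b} :=
          (Fintype.card_subtype _).symm
  have hlam : P.aP lam b = Fintype.card {c : lam.Cell // P.π c.1 < b} := by
    calc P.aP lam b
        = ∑ k ∈ Finset.univ.filter (fun k => P.π k < b), ∑ i, lam.part k i := rfl
      _ = ∑ k ∈ Finset.univ.filter (fun k => P.π k < b),
            ((Finset.univ : Finset (Σ i : Fin (m k), Fin (lam.part k i))).card) := by
          refine Finset.sum_congr rfl fun k _ => ?_
          rw [Finset.card_univ, Fintype.card_sigma]
          simp
      _ = ((Finset.univ.filter fun k => P.π k < b).sigma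
            (fun k => (Finset.univ : Finset (Σ i : Fin (m k), Fin (lam.part k i))))).card := by
          rw [Finset.card_sigma]
      _ = (Finset.univ.filter fun c : lam.Cell => P.π c.1 < b).card := by
          congr 1
          ext ⟨k, i, j⟩
          simp [Finset.mem_sigma]
      _ = Fintype.card {c : lam.Cell // P.π c.1 < b} :=
          (Fintype.card_subtype _).symm
  rw [hmu, hlam]
  exact Fintype.card_subtype_mono _ _
    (fun c hc => lt_of_le_of_lt (P.mono (T.compLE c)) hc)

lemma aP_le_of_dominates (hm : ∀ k, 0 < m k) {lam' lam : MultiComp n r m}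
    (h : MultiComp.Dominates lam' lam) : vecLE (P.aP lam) (P.aP lam') := by
  intro b
  rcases Finset.eq_empty_or_nonempty
    (Finset.univ.filter (fun k => P.π k < b)) with he | hne
  · show (∑ k ∈ Finset.univ.filter (fun k => P.π k < b), lam.compSize k) ≤ _
    rw [he]
    simp
  · set k1 := (Finset.univ.filter (fun k => P.π k < b)).max' hne with hk1
    have hk1mem : k1 ∈ Finset.univ.filter (fun k => P.π k < b) :=
      Finset.max'_mem _ hne
    have hk1lt : P.π k1 < b := by
      simpa using hk1mem
    have hseq : ∀ mu : MultiComp n r m, P.aP mu b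
        = (∑ c ∈ Finset.univ.filter (· < k1), mu.compSize c) + mu.compSize k1 := by
      intro mu
      have h1 : Finset.univ.filter (fun k => P.π k < b)
          = Finset.univ.filter (· ≤ k1) := by
        ext k
        simp only [Finset.mem_filter, Finset.mem_univ, true_and]
        constructor
        · intro hk
          exact Finset.le_max' _ k (by simpa using hk)
        · intro hk
          exact lt_of_le_of_lt (P.mono hk) hk1lt
      show (∑ k ∈ Finset.univ.filter (fun k => P.π k < b), mu.compSize k) = _
      rw [h1, show Finset.univ.filter (· ≤ k1)
            = insert k1 (Finset.univ.filter (· < k1)) from by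
          ext k; simp [le_iff_lt_or_eq, or_comm],
        Finset.sum_insert (by simp)]
      exact add_comm _ _
    rw [hseq lam, hseq lam']
    have hmk1 := hm k1
    set itop : Fin (m k1) := ⟨m k1 - 1, by omega⟩ with hitop
    have hfil : (Finset.univ.filter (· ≤ itop)) = (Finset.univ : Finset (Fin (m k1))) := by
      ext j
      simp only [Finset.mem_filter, Finset.mem_univ, true_and, iff_true]
      have := j.2
      exact Fin.le_def.2 (by simp only [hitop]; omega)
    have hd := h k1 itop
    rw [hfil] at hd
    simpa [MultiComp.compSize] using hd

end BlockCtx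

end AuxComb
section AuxAlg

variable {R : Type} [CommRing R] [IsDomain R] {n r g : ℕ} {m : Fin r → ℕ}
variable {Λ : Finset (MultiComp n r m)}

/-- the index set of the "good" basis elements constituting `Z^p` -/
def GoodIdx (P : BlockCtx r g) (i : DJMIndex Λ) : Prop :=
  P.alphaP i.2.1.1 ≠ P.alphaP i.2.2.1.1 → vecLT (P.aP i.2.1.1) (P.aP i.1.1)

/-- the `μ ↔ ν` swap on basis indices induced by the anti-automorphism -/
def swapIdx (i : DJMIndex Λ) : DJMIndex Λ :=
  ⟨i.1, i.2.2.1, i.2.1, (i.2.2.2.2, i.2.2.2.1)⟩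

namespace SchurAlgebra

variable (SA : SchurAlgebra R Λ) (P : BlockCtx r g)

lemma zpSet_eq_image : SA.ZpSet P = SA.bas '' {i : DJMIndex Λ | GoodIdx P i} := by
  ext x
  constructor
  · rintro ⟨lam, mu, nu, S, T, hc, rfl⟩
    exact ⟨⟨lam, mu, nu, (S, T)⟩, hc, rfl⟩
  · rintro ⟨⟨lam, mu, nu, S, T⟩, hi, rfl⟩
    exact ⟨lam, mu, nu, S, T, hi, rfl⟩

lemma bas_mul_phiId_self (i : DJMIndex Λ) :
    SA.bas i * SA.phiId i.2.2.1 = SA.bas i := by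
  obtain ⟨lam, mu, nu, S, T⟩ := i
  rw [SA.bas_mul_phiId lam mu nu S T nu, if_pos rfl]

lemma phiId_mul_bas_self (i : DJMIndex Λ) :
    SA.phiId i.2.1 * SA.bas i = SA.bas i := by
  obtain ⟨lam, mu, nu, S, T⟩ := i
  rw [SA.phiId_mul_bas lam mu nu S T mu, if_pos rfl]

lemma mul_eq_zero_of_ne (i j : DJMIndex Λ) (h : i.2.2.1 ≠ j.2.1) :
    SA.bas i * SA.bas j = 0 := by
  calc SA.bas i * SA.bas j
      = (SA.bas i * SA.phiId i.2.2.1) * (SA.phiId j.2.1 * SA.bas j) := by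
        rw [bas_mul_phiId_self, phiId_mul_bas_self]
    _ = SA.bas i * ((SA.phiId i.2.2.1 * SA.phiId j.2.1) * SA.bas j) := by
        rw [mul_assoc, ← mul_assoc (SA.phiId i.2.2.1)]
    _ = 0 := by rw [SA.phiId_mul, if_neg h, zero_mul, mul_zero]

lemma sandwich_mem_span (y : SA.carrier) (ρ ρ' : LamS Λ) :
    SA.phiId ρ * y * SA.phiId ρ' ∈ Submodule.span R
      (SA.bas '' {j : DJMIndex Λ | j.2.1 = ρ ∧ j.2.2.1 = ρ'}) := by
  rw [show SA.phiId ρ * y * SA.phiId ρ' = SA.phiId ρ * (∑ j, SA.bas.repr y j • SA.bas j) * SA.phiId ρ' from by rw [SA.bas.sum_repr y]]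
  rw [Finset.mul_sum, Finset.sum_mul]
  apply Submodule.sum_mem
  intro j _
  rw [mul_smul_comm, smul_mul_assoc]
  apply Submodule.smul_mem
  obtain ⟨lam, mu, nu, S, T⟩ := j
  rw [SA.phiId_mul_bas lam mu nu S T ρ]
  by_cases h1 : ρ = mu
  · rw [if_pos h1, SA.bas_mul_phiId lam mu nu S T ρ']
    by_cases h2 : ρ' = nu
    · rw [if_pos h2]
      exact Submodule.subset_span ⟨⟨lam, mu, nu, (S, T)⟩, ⟨h1.symm, h2.symm⟩, rfl⟩
    · rw [if_neg h2]
      exact Submodule.zero_mem _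
  · rw [if_neg h1, zero_mul]
    exact Submodule.zero_mem _

lemma astar_bas_idx (i : DJMIndex Λ) :
    SA.astar (SA.bas i) = SA.bas (swapIdx i) := by
  obtain ⟨lam, mu, nu, S, T⟩ := i
  exact SA.astar_bas lam mu nu S T

lemma astar_astar (x : SA.carrier) : SA.astar (SA.astar x) = x := by
  have h : (SA.astar ∘ₗ SA.astar) = LinearMap.id := by
    apply SA.bas.ext
    intro i
    obtain ⟨lam, mu, nu, S, T⟩ := i
    simp only [LinearMap.comp_apply, LinearMap.id_apply, SA.astar_bas]
  exact congrArg (fun f => f x) (congrArg DFunLike.coe h)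

lemma astar_mem_span_image {A : Set (DJMIndex Λ)} {x : SA.carrier}
    (hx : x ∈ Submodule.span R (SA.bas '' A)) :
    SA.astar x ∈ Submodule.span R (SA.bas '' (swapIdx '' A)) := by
  have h1 : SA.astar x ∈ Submodule.map SA.astar (Submodule.span R (SA.bas '' A)) :=
    Submodule.mem_map_of_mem hx
  rw [Submodule.map_span] at h1
  refine Submodule.span_mono ?_ h1
  rintro _ ⟨_, ⟨i, hi, rfl⟩, rfl⟩
  exact ⟨swapIdx i, ⟨i, hi, rfl⟩, (astar_bas_idx SA i).symm⟩

lemma repr_zero_of_mem_span_image {A : Set (DJMIndex Λ)} {x : SA.carrier}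
    (hx : x ∈ Submodule.span R (SA.bas '' A)) {idx : DJMIndex Λ} (h : idx ∉ A) :
    SA.bas.repr x idx = 0 := by
  by_contra hne
  exact h ((SA.bas.mem_span_image.1 hx) (Finsupp.mem_support_iff.2 hne))

lemma sVee_set_subset (lam : LamP Λ) :
    {y : SA.carrier | ∃ (lam' : LamP Λ) (mu' nu' : LamS Λ)
      (S' : SSTab lam'.1 mu'.1) (T' : SSTab lam'.1 nu'.1),
      MultiComp.SDominates lam'.1 lam.1 ∧ y = SA.bas ⟨lam', mu', nu', (S', T')⟩}
    ⊆ SA.bas '' {j : DJMIndex Λ | MultiComp.SDominates j.1.1 lam.1} := by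
  rintro y ⟨lam', mu', nu', S', T', hd, rfl⟩
  exact ⟨⟨lam', mu', nu', (S', T')⟩, hd, rfl⟩

lemma repr_sum_smul_apply {κ : Type} [Fintype κ] [DecidableEq κ]
    (c : κ → R) (f : κ → DJMIndex Λ) (hf : Function.Injective f) (x0 : κ) :
    SA.bas.repr (∑ x, c x • SA.bas (f x)) (f x0) = c x0 := by
  rw [map_sum, Finsupp.finset_sum_apply]
  simp only [map_smul, Finsupp.smul_apply, Module.Basis.repr_self, smul_eq_mul,
    Finsupp.single_apply, hf.eq_iff, mul_ite, mul_one, mul_zero]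
  simp

lemma repr_sum_smul_apply_of_ne {κ : Type} [Fintype κ]
    (c : κ → R) (f : κ → DJMIndex Λ) {idx : DJMIndex Λ} (h : ∀ x, f x ≠ idx) :
    SA.bas.repr (∑ x, c x • SA.bas (f x)) idx = 0 := by
  rw [map_sum, Finsupp.finset_sum_apply]
  simp only [map_smul, Finsupp.smul_apply, Module.Basis.repr_self, smul_eq_mul,
    Finsupp.single_apply]
  refine Finset.sum_eq_zero fun x _ => ?_
  rw [if_neg (h x), mul_zero]

end SchurAlgebra

end AuxAlg
section AuxMain

variable {R : Type} [CommRing R] [IsDomain R] {n r g : ℕ} {m : Fin r → ℕ}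
variable {Λ : Finset (MultiComp n r m)}

namespace SchurAlgebra

variable (SA : SchurAlgebra R Λ) (P : BlockCtx r g)

lemma main_supp (lam1 lam2 : LamP Λ) (mu1 nu1 mu2 nu2 : LamS Λ)
    (S1 : SSTab lam1.1 mu1.1) (T1 : SSTab lam1.1 nu1.1)
    (S2 : SSTab lam2.1 mu2.1) (T2 : SSTab lam2.1 nu2.1)
    (idx : DJMIndex Λ)
    (h : SA.bas.repr (SA.bas ⟨lam1, mu1, nu1, (S1, T1)⟩ *
      SA.bas ⟨lam2, mu2, nu2, (S2, T2)⟩) idx ≠ 0) :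
    idx.2.1 = mu1 ∧ idx.2.2.1 = nu2 ∧
    ((∃ x : TabOf Λ lam2, idx = ⟨lam2, x.1, nu2, (x.2, T2)⟩) ∨
      MultiComp.SDominates idx.1.1 lam2.1) ∧
    ((∃ y : TabOf Λ lam1, idx = ⟨lam1, mu1, y.1, (S1, y.2)⟩) ∨
      MultiComp.SDominates idx.1.1 lam1.1) := by
  set z1 := SA.bas ⟨lam1, mu1, nu1, (S1, T1)⟩ with hz1
  set z2 := SA.bas ⟨lam2, mu2, nu2, (S2, T2)⟩ with hz2
  have hmem : ∀ A : Set (DJMIndex Λ),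
      z1 * z2 ∈ Submodule.span R (SA.bas '' A) → idx ∈ A := by
    intro A hA
    by_contra hn
    exact h (repr_zero_of_mem_span_image SA hA hn)
  have hsand : z1 * z2 = SA.phiId mu1 * (z1 * z2) * SA.phiId nu2 := by
    have h1 : SA.phiId mu1 * z1 = z1 := phiId_mul_bas_self SA ⟨lam1, mu1, nu1, (S1, T1)⟩
    have h2 : z2 * SA.phiId nu2 = z2 := bas_mul_phiId_self SA ⟨lam2, mu2, nu2, (S2, T2)⟩
    calc z1 * z2 = (SA.phiId mu1 * z1) * (z2 * SA.phiId nu2) := by rw [h1, h2]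
      _ = SA.phiId mu1 * (z1 * z2) * SA.phiId nu2 := by
          rw [mul_assoc, ← mul_assoc z1, ← mul_assoc]
  have hp12 : idx ∈ {j : DJMIndex Λ | j.2.1 = mu1 ∧ j.2.2.1 = nu2} := by
    apply hmem
    rw [hsand]
    exact sandwich_mem_span SA (z1 * z2) mu1 nu2
  refine ⟨hp12.1, hp12.2, ?_, ?_⟩
  · -- via cellularity on the right factor
    obtain ⟨c0, hc0⟩ := SA.cellular z1 lam2 mu2 S2
    have hrel := hc0 nu2 T2
    apply hmem
    have hsum : (∑ x : Σ mu' : LamS Λ, SSTab lam2.1 mu'.1,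
        c0 x • SA.bas ⟨lam2, x.1, nu2, (x.2, T2)⟩) ∈ Submodule.span R (SA.bas ''
          ({j : DJMIndex Λ | ∃ x : TabOf Λ lam2, j = ⟨lam2, x.1, nu2, (x.2, T2)⟩} ∪
           {j : DJMIndex Λ | MultiComp.SDominates j.1.1 lam2.1})) := by
      apply Submodule.sum_mem
      intro x _
      exact Submodule.smul_mem _ _
        (Submodule.subset_span ⟨⟨lam2, x.1, nu2, (x.2, T2)⟩, Or.inl ⟨x, rfl⟩, rfl⟩)
    have herr : z1 * z2 - (∑ x : Σ mu' : LamS Λ, SSTab lam2.1 mu'.1,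
        c0 x • SA.bas ⟨lam2, x.1, nu2, (x.2, T2)⟩) ∈ Submodule.span R (SA.bas ''
          ({j : DJMIndex Λ | ∃ x : TabOf Λ lam2, j = ⟨lam2, x.1, nu2, (x.2, T2)⟩} ∪
           {j : DJMIndex Λ | MultiComp.SDominates j.1.1 lam2.1})) := by
      refine Submodule.span_le.2 ?_ hrel
      refine (sVee_set_subset SA lam2).trans ?_
      refine (Set.image_mono ?_).trans Submodule.subset_span
      exact Set.subset_union_right
    have := Submodule.add_mem _ herr hsum
    rw [sub_add_cancel] at this; exact this
  · -- via cellularity through the anti-automorphism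
    obtain ⟨c1, hc1⟩ := SA.cellular (SA.astar z2) lam1 nu1 T1
    have hrel := hc1 mu1 S1
    have hstar : SA.astar z2 * SA.bas ⟨lam1, nu1, mu1, (T1, S1)⟩ = SA.astar (z1 * z2) := by
      rw [SA.astar_mul]
      congr 1
      exact (SA.astar_bas lam1 mu1 nu1 S1 T1).symm
    rw [hstar] at hrel
    have hsum : (∑ y : Σ mu' : LamS Λ, SSTab lam1.1 mu'.1,
        c1 y • SA.bas ⟨lam1, y.1, mu1, (y.2, S1)⟩) ∈ Submodule.span R (SA.bas ''
          ({j : DJMIndex Λ | ∃ y : TabOf Λ lam1, j = ⟨lam1, y.1, mu1, (y.2, S1)⟩} ∪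
           {j : DJMIndex Λ | MultiComp.SDominates j.1.1 lam1.1})) := by
      apply Submodule.sum_mem
      intro y _
      exact Submodule.smul_mem _ _
        (Submodule.subset_span ⟨⟨lam1, y.1, mu1, (y.2, S1)⟩, Or.inl ⟨y, rfl⟩, rfl⟩)
    have herr : SA.astar (z1 * z2) ∈ Submodule.span R (SA.bas ''
          ({j : DJMIndex Λ | ∃ y : TabOf Λ lam1, j = ⟨lam1, y.1, mu1, (y.2, S1)⟩} ∪
           {j : DJMIndex Λ | MultiComp.SDominates j.1.1 lam1.1})) := by
      have h1 : SA.astar (z1 * z2) - (∑ y : Σ mu' : LamS Λ, SSTab lam1.1 mu'.1,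
          c1 y • SA.bas ⟨lam1, y.1, mu1, (y.2, S1)⟩) ∈ Submodule.span R (SA.bas ''
            ({j : DJMIndex Λ | ∃ y : TabOf Λ lam1, j = ⟨lam1, y.1, mu1, (y.2, S1)⟩} ∪
             {j : DJMIndex Λ | MultiComp.SDominates j.1.1 lam1.1})) := by
        refine Submodule.span_le.2 ?_ hrel
        refine (sVee_set_subset SA lam1).trans ?_
        refine (Set.image_mono ?_).trans Submodule.subset_span
        exact Set.subset_union_right
      have := Submodule.add_mem _ h1 hsum
      simpa using this
    have hback := astar_mem_span_image SA herr
    rw [astar_astar] at hback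
    apply hmem
    refine Submodule.span_mono ?_ hback
    apply Set.image_mono
    rintro _ ⟨j, hj | hj, rfl⟩
    · obtain ⟨y, rfl⟩ := hj
      exact Or.inl ⟨y, rfl⟩
    · exact Or.inr hj

lemma good_supp (hm : ∀ k, 0 < m k) {i1 i2 idx : DJMIndex Λ}
    (hg1 : GoodIdx P i1) (hg2 : GoodIdx P i2)
    (h : SA.bas.repr (SA.bas i1 * SA.bas i2) idx ≠ 0) : GoodIdx P idx := by
  obtain ⟨lam1, mu1, nu1, S1, T1⟩ := i1
  obtain ⟨lam2, mu2, nu2, S2, T2⟩ := i2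
  by_cases hne : nu1 = mu2
  case neg =>
    exfalso
    apply h
    rw [mul_eq_zero_of_ne SA ⟨lam1, mu1, nu1, (S1, T1)⟩ ⟨lam2, mu2, nu2, (S2, T2)⟩ hne,
      map_zero]
    rfl
  obtain ⟨hμ, hν, hd2, hd1⟩ :=
    main_supp SA lam1 lam2 mu1 nu1 mu2 nu2 S1 T1 S2 T2 idx h
  obtain ⟨lamI, muI, nuI, SI, TI⟩ := idx
  simp only at hμ hν
  intro hα
  have hle : vecLE (P.aP muI.1) (P.aP lamI.1) := P.aP_le_of_sstab SI
  refine ⟨hle, ?_⟩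
  intro heq
  have hdom2 : MultiComp.Dominates lamI.1 lam2.1 := by
    rcases hd2 with ⟨x, hx⟩ | hsd
    · have hl : lamI = lam2 := congrArg Sigma.fst hx
      rw [hl]
      exact fun k i => le_refl _
    · exact hsd.1
  have hdom1 : MultiComp.Dominates lamI.1 lam1.1 := by
    rcases hd1 with ⟨y, hy⟩ | hsd
    · have hl : lamI = lam1 := congrArg Sigma.fst hy
      rw [hl]
      exact fun k i => le_refl _
    · exact hsd.1
  have hle2 : vecLE (P.aP lam2.1) (P.aP lamI.1) := P.aP_le_of_dominates hm hdom2
  have hle1 : vecLE (P.aP lam1.1) (P.aP lamI.1) := P.aP_le_of_dominates hm hdom1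
  subst hμ hν
  by_cases hA : P.alphaP muI.1 = P.alphaP nu1.1
  · have ha1 : P.aP muI.1 = P.aP nu1.1 := P.aP_eq_of_alphaP_eq hA
    have hα2 : P.alphaP mu2.1 ≠ P.alphaP nuI.1 := by
      rw [← hne, ← hA]
      exact hα
    have hlt2 := hg2 hα2
    apply hlt2.2
    have haux : P.aP mu2.1 = P.aP lamI.1 := by
      rw [← hne, ← ha1]
      exact heq
    funext b
    refine le_antisymm (hlt2.1 b) ?_
    rw [haux]
    exact hle2 b
  · have hlt1 := hg1 hA
    apply hlt1.2
    funext b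
    refine le_antisymm (hlt1.1 b) ?_
    rw [heq]
    exact hle1 b

lemma exists_zpAt {idx : DJMIndex Λ} (hg : GoodIdx P idx) :
    ∃ f : SigmaPIdx Λ P, f.1.1 = idx.1 ∧ SA.bas idx ∈ SA.ZpAt P f := by
  obtain ⟨lam, mu, nu, S, T⟩ := idx
  by_cases hmu : P.aP mu.1 = P.aP lam.1
  · have hnu : P.aP nu.1 = P.aP lam.1 := by
      by_contra hnu
      have hα : P.alphaP mu.1 ≠ P.alphaP nu.1 := by
        intro hA
        exact hnu (by rw [← P.aP_eq_of_alphaP_eq hA]; exact hmu)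
      exact (hg hα).2 hmu
    exact ⟨eZero P lam, rfl, ⟨mu, S⟩, Or.inr ⟨rfl, hmu⟩, ⟨nu, T⟩, Or.inr hnu, rfl⟩
  · have hlt : vecLT (P.aP mu.1) (P.aP lam.1) := ⟨P.aP_le_of_sstab S, hmu⟩
    exact ⟨⟨(lam, true), fun _ => ⟨mu, hlt, ⟨S⟩⟩⟩, rfl, ⟨mu, S⟩, Or.inl ⟨rfl, hlt⟩,
      ⟨nu, T⟩, Or.inl rfl, rfl⟩

lemma mem_spVee_of_zpAt {e f : SigmaPIdx Λ P} (hgt : sigmaGT P f e)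
    {x : SA.carrier} (hx : x ∈ SA.ZpAt P f) : x ∈ SA.SpVee P e :=
  Submodule.subset_span (Set.mem_iUnion.2 ⟨⟨f, hgt⟩, hx⟩)

lemma bas_mem_spVee {e : SigmaPIdx Λ P} {idx : DJMIndex Λ}
    (hg : GoodIdx P idx) (hd : MultiComp.SDominates idx.1.1 e.1.1.1) :
    SA.bas idx ∈ SA.SpVee P e := by
  obtain ⟨f, hf1, hf2⟩ := exists_zpAt SA P hg
  refine mem_spVee_of_zpAt SA P (Or.inl ?_) hf2
  rw [hf1]
  exact hd

lemma good_of_mem (e : SigmaPIdx Λ P) (S T : TabOf Λ e.1.1)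
    (hS : S ∈ pIp P e) (hT : T ∈ pJp P e) :
    GoodIdx P ⟨e.1.1, S.1, T.1, (S.2, T.2)⟩ := by
  intro hα
  rcases hS with ⟨_, hlt⟩ | ⟨hf, hc⟩
  · exact hlt
  · rcases hT with ht | hcT
    · rw [hf] at ht
      exact absurd ht (by simp)
    · exact absurd (P.alphaP_eq_of_aP_eq (hc.trans hcT.symm)) hα

end SchurAlgebra

end AuxMain
section AuxBased

variable {R : Type} [CommRing R] [IsDomain R] {n r g : ℕ} {m : Fin r → ℕ}
variable {Λ : Finset (MultiComp n r m)}

namespace SchurAlgebra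

variable (SA : SchurAlgebra R Λ) (P : BlockCtx r g)

lemma fam_inj_left (lam : LamP Λ) (ν : LamS Λ) (Tt : SSTab lam.1 ν.1) :
    Function.Injective
      (fun x : TabOf Λ lam => (⟨lam, x.1, ν, (x.2, Tt)⟩ : DJMIndex Λ)) := by
  rintro ⟨xm, xs⟩ ⟨ym, ys⟩ h
  simp only at h
  have hm : xm = ym := congrArg (fun j : DJMIndex Λ => j.2.1) h
  subst hm
  have ha := sigma_mk_injective h
  have hb := sigma_mk_injective ha
  have hc := sigma_mk_injective hb
  exact congrArg (fun s => (⟨xm, s⟩ : TabOf Λ lam)) (congrArg Prod.fst hc)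

lemma fam_inj_right (lam : LamP Λ) (μ : LamS Λ) (Ss : SSTab lam.1 μ.1) :
    Function.Injective
      (fun y : TabOf Λ lam => (⟨lam, μ, y.1, (Ss, y.2)⟩ : DJMIndex Λ)) := by
  rintro ⟨xm, xs⟩ ⟨ym, ys⟩ h
  simp only at h
  have hm : xm = ym := congrArg (fun j : DJMIndex Λ => j.2.2.1) h
  subst hm
  have ha := sigma_mk_injective h
  have hb := sigma_mk_injective ha
  have hc := sigma_mk_injective hb
  exact congrArg (fun s => (⟨xm, s⟩ : TabOf Λ lam)) (congrArg Prod.snd hc)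

lemma repr_zero_of_mem_sveeSpan {lam : LamP Λ} {x : SA.carrier}
    (hx : x ∈ Submodule.span R {y : SA.carrier | ∃ (lam' : LamP Λ) (mu' nu' : LamS Λ)
      (S' : SSTab lam'.1 mu'.1) (T' : SSTab lam'.1 nu'.1),
      MultiComp.SDominates lam'.1 lam.1 ∧ y = SA.bas ⟨lam', mu', nu', (S', T')⟩})
    {idx : DJMIndex Λ} (hidx : ¬ MultiComp.SDominates idx.1.1 lam.1) :
    SA.bas.repr x idx = 0 :=
  repr_zero_of_mem_span_image SA
    (Submodule.span_le.2 ((sVee_set_subset SA lam).trans Submodule.subset_span) hx) hidx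

lemma left_based (hm : ∀ k, 0 < m k) (i1 : DJMIndex Λ) (hg1 : GoodIdx P i1)
    (e : SigmaPIdx Λ P) (S : TabOf Λ e.1.1) (hS : S ∈ pIp P e) :
    ∃ c : TabOf Λ e.1.1 → R, (∀ x, x ∉ pIp P e → c x = 0) ∧
      ∀ T ∈ pJp P e,
        SA.bas i1 * SA.bas ⟨e.1.1, S.1, T.1, (S.2, T.2)⟩ -
            ∑ S' : TabOf Λ e.1.1, c S' • SA.bas ⟨e.1.1, S'.1, T.1, (S'.2, T.2)⟩
          ∈ SA.SpVee P e := by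
  classical
  obtain ⟨lam1, mu1, nu1, S1, T1⟩ := i1
  by_cases hν : nu1 = S.1
  case neg =>
    refine ⟨0, fun _ _ => rfl, fun T hT => ?_⟩
    rw [mul_eq_zero_of_ne SA ⟨lam1, mu1, nu1, (S1, T1)⟩ ⟨e.1.1, S.1, T.1, (S.2, T.2)⟩ hν]
    simpa using Submodule.zero_mem (SA.SpVee P e)
  case pos =>
  obtain ⟨c0, hc0⟩ := SA.cellular (SA.bas ⟨lam1, mu1, nu1, (S1, T1)⟩) e.1.1 S.1 S.2
  refine ⟨fun x => if mu1 = x.1 ∧ x ∈ pIp P e then c0 x else 0,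
    fun x hx => by simp [hx], fun T hT => ?_⟩
  have hgST : GoodIdx P ⟨e.1.1, S.1, T.1, (S.2, T.2)⟩ := good_of_mem P e S T hS hT
  set f : TabOf Λ e.1.1 → DJMIndex Λ :=
    fun x => ⟨e.1.1, x.1, T.1, (x.2, T.2)⟩ with hf
  have hfinj : Function.Injective f := fam_inj_left e.1.1 T.1 T.2
  set prod := SA.bas ⟨lam1, mu1, nu1, (S1, T1)⟩ * SA.bas ⟨e.1.1, S.1, T.1, (S.2, T.2)⟩
    with hprod
  have hrel := hc0 T.1 T.2
  have hcoord : ∀ x : TabOf Λ e.1.1, SA.bas.repr prod (f x) = c0 x := by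
    intro x
    have h0 : SA.bas.repr (prod - ∑ x : TabOf Λ e.1.1, c0 x • SA.bas (f x)) (f x) = 0 :=
      repr_zero_of_mem_sveeSpan SA hrel (fun hsd => hsd.2 rfl)
    rw [map_sub, Finsupp.sub_apply, repr_sum_smul_apply SA c0 f hfinj x] at h0
    exact sub_eq_zero.1 h0
  set G := prod - ∑ S' : TabOf Λ e.1.1,
    (if mu1 = S'.1 ∧ S' ∈ pIp P e then c0 S' else 0) • SA.bas (f S') with hG
  show G ∈ SA.SpVee P e
  rw [← SA.bas.sum_repr G]
  apply Submodule.sum_mem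
  intro idx _
  by_cases hz : SA.bas.repr G idx = 0
  · rw [hz, zero_smul]
    exact Submodule.zero_mem _
  apply Submodule.smul_mem
  by_cases hrange : ∃ x : TabOf Λ e.1.1, f x = idx
  · obtain ⟨x0, rfl⟩ := hrange
    have hGx : SA.bas.repr G (f x0)
        = c0 x0 - (if mu1 = x0.1 ∧ x0 ∈ pIp P e then c0 x0 else 0) := by
      rw [hG, map_sub, Finsupp.sub_apply, hcoord x0,
        repr_sum_smul_apply SA _ f hfinj x0]
    by_cases hx0 : mu1 = x0.1 ∧ x0 ∈ pIp P e
    · exact absurd (by rw [hGx, if_pos hx0, sub_self]) hz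
    by_cases hmu1 : mu1 = x0.1
    · -- x0 ∉ pIp e
      have hxIp : x0 ∉ pIp P e := fun hin => hx0 ⟨hmu1, hin⟩
      have hc0ne : c0 x0 ≠ 0 := by
        intro h0
        exact hz (by rw [hGx, if_neg hx0, h0, sub_zero])
      have hprodne : SA.bas.repr prod (f x0) ≠ 0 := by
        rw [hcoord x0]
        exact hc0ne
      have hgood : GoodIdx P (f x0) := good_supp SA P hm hg1 hgST hprodne
      obtain ⟨hμ, hν2, hd2, hd1⟩ :=
        main_supp SA lam1 e.1.1 mu1 nu1 S.1 T.1 S1 T1 S.2 T.2 (f x0) hprodne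
      cases hb : e.1.2 with
      | false =>
        have hnc : ¬ pCond P e.1.1 x0 := fun hc => hxIp (Or.inr ⟨hb, hc⟩)
        have hlt : vecLT (P.aP x0.1.1) (P.aP e.1.1.1) := ⟨P.aP_le_of_sstab x0.2, hnc⟩
        exact mem_spVee_of_zpAt SA P (e := e) (f := ⟨(e.1.1, true), fun _ => ⟨x0.1, hlt, ⟨x0.2⟩⟩⟩)
          (Or.inr ⟨rfl, rfl, hb⟩) ⟨x0, Or.inl ⟨rfl, hlt⟩, T, Or.inl rfl, rfl⟩
      | true =>
        exfalso
        have haPeq : P.aP x0.1.1 = P.aP e.1.1.1 := by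
          by_contra hne2
          exact hxIp (Or.inl ⟨hb, ⟨P.aP_le_of_sstab x0.2, hne2⟩⟩)
        have hαeq : P.alphaP x0.1.1 = P.alphaP T.1.1 := by
          by_contra hαne
          exact (hgood hαne).2 haPeq
        have hSlt : vecLT (P.aP S.1.1) (P.aP e.1.1.1) := by
          rcases hS with ⟨_, hlt⟩ | ⟨hfalse, _⟩
          · exact hlt
          · rw [hfalse] at hb
            exact absurd hb (by simp)
        have hdom : MultiComp.Dominates e.1.1.1 lam1.1 := by
          rcases hd1 with ⟨y, hy⟩ | hsd
          · have hl : e.1.1 = lam1 := congrArg Sigma.fst hy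
            rw [hl]
            exact fun k i => le_refl _
          · exact hsd.1
        by_cases hA : P.alphaP mu1.1 = P.alphaP nu1.1
        · have h1 : P.aP mu1.1 = P.aP nu1.1 := P.aP_eq_of_alphaP_eq hA
          apply hSlt.2
          rw [← hν, ← h1, hmu1]
          exact haPeq
        · have hlt1 := hg1 hA
          apply hlt1.2
          funext b
          refine le_antisymm (hlt1.1 b) ?_
          have h2 := P.aP_le_of_dominates hm hdom b
          show P.aP lam1.1 b ≤ P.aP mu1.1 b
          rw [hmu1, haPeq]
          exact h2
    · -- mu1 ≠ x0.1 : contradiction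
      exfalso
      have hc00 : c0 x0 = 0 := by
        by_contra hc0ne
        have hprodne : SA.bas.repr prod (f x0) ≠ 0 := by
          rw [hcoord x0]
          exact hc0ne
        obtain ⟨hμ, -, -, -⟩ :=
          main_supp SA lam1 e.1.1 mu1 nu1 S.1 T.1 S1 T1 S.2 T.2 (f x0) hprodne
        exact hmu1 hμ.symm
      apply hz
      rw [hGx, if_neg hx0, hc00, sub_zero]
  · -- idx not of shape e.1.1 with the given T
    have hsum0 : SA.bas.repr (∑ S' : TabOf Λ e.1.1,
        (if mu1 = S'.1 ∧ S' ∈ pIp P e then c0 S' else 0) • SA.bas (f S')) idx = 0 :=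
      repr_sum_smul_apply_of_ne SA _ f (fun x heq => hrange ⟨x, heq⟩)
    have hprodne : SA.bas.repr prod idx ≠ 0 := by
      rw [hG, map_sub, Finsupp.sub_apply, hsum0, sub_zero] at hz
      exact hz
    have hgood : GoodIdx P idx := good_supp SA P hm hg1 hgST hprodne
    obtain ⟨-, -, hd2, -⟩ :=
      main_supp SA lam1 e.1.1 mu1 nu1 S.1 T.1 S1 T1 S.2 T.2 idx hprodne
    have hsd : MultiComp.SDominates idx.1.1 e.1.1.1 := by
      rcases hd2 with ⟨x, hx⟩ | h
      · exact absurd hx.symm (fun hh => hrange ⟨x, hh⟩)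
      · exact h
    exact bas_mem_spVee SA P hgood hsd

end SchurAlgebra

end AuxBased
section AuxBased2

variable {R : Type} [CommRing R] [IsDomain R] {n r g : ℕ} {m : Fin r → ℕ}
variable {Λ : Finset (MultiComp n r m)}

namespace SchurAlgebra

variable (SA : SchurAlgebra R Λ) (P : BlockCtx r g)

lemma astar_mem_span_sdom {lam : LamP Λ} {x : SA.carrier}
    (hx : x ∈ Submodule.span R {y : SA.carrier | ∃ (lam' : LamP Λ) (mu' nu' : LamS Λ)
      (S' : SSTab lam'.1 mu'.1) (T' : SSTab lam'.1 nu'.1),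
      MultiComp.SDominates lam'.1 lam.1 ∧ y = SA.bas ⟨lam', mu', nu', (S', T')⟩}) :
    SA.astar x ∈ Submodule.span R
      (SA.bas '' {j : DJMIndex Λ | MultiComp.SDominates j.1.1 lam.1}) := by
  have h1 : x ∈ Submodule.span R
      (SA.bas '' {j : DJMIndex Λ | MultiComp.SDominates j.1.1 lam.1}) :=
    Submodule.span_le.2 ((sVee_set_subset SA lam).trans Submodule.subset_span) hx
  have h2 := astar_mem_span_image SA h1
  refine Submodule.span_mono ?_ h2
  apply Set.image_mono
  rintro _ ⟨j, hj, rfl⟩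
  exact hj

lemma right_based (hm : ∀ k, 0 < m k) (i1 : DJMIndex Λ) (hg1 : GoodIdx P i1)
    (e : SigmaPIdx Λ P) (T : TabOf Λ e.1.1) (hT : T ∈ pJp P e) :
    ∃ c : TabOf Λ e.1.1 → R, (∀ x, x ∉ pJp P e → c x = 0) ∧
      ∀ S ∈ pIp P e,
        SA.bas ⟨e.1.1, S.1, T.1, (S.2, T.2)⟩ * SA.bas i1 -
            ∑ T' : TabOf Λ e.1.1, c T' • SA.bas ⟨e.1.1, S.1, T'.1, (S.2, T'.2)⟩
          ∈ SA.SpVee P e := by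
  classical
  obtain ⟨lam1, mu1, nu1, S1, T1⟩ := i1
  by_cases hμ : mu1 = T.1
  case neg =>
    refine ⟨0, fun _ _ => rfl, fun S hS => ?_⟩
    rw [mul_eq_zero_of_ne SA ⟨e.1.1, S.1, T.1, (S.2, T.2)⟩ ⟨lam1, mu1, nu1, (S1, T1)⟩
      (fun hh => hμ hh.symm)]
    simpa using Submodule.zero_mem (SA.SpVee P e)
  case pos =>
  obtain ⟨c0, hc0⟩ :=
    SA.cellular (SA.astar (SA.bas ⟨lam1, mu1, nu1, (S1, T1)⟩)) e.1.1 T.1 T.2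
  refine ⟨fun y => if nu1 = y.1 ∧ y ∈ pJp P e then c0 y else 0,
    fun y hy => by simp [hy], fun S hS => ?_⟩
  have hgST : GoodIdx P ⟨e.1.1, S.1, T.1, (S.2, T.2)⟩ := good_of_mem P e S T hS hT
  set f : TabOf Λ e.1.1 → DJMIndex Λ :=
    fun y => ⟨e.1.1, S.1, y.1, (S.2, y.2)⟩ with hf
  have hfinj : Function.Injective f := fam_inj_right e.1.1 S.1 S.2
  set prod := SA.bas ⟨e.1.1, S.1, T.1, (S.2, T.2)⟩ * SA.bas ⟨lam1, mu1, nu1, (S1, T1)⟩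
    with hprod
  have hrel0 := hc0 S.1 S.2
  have hstar : SA.astar (SA.bas ⟨lam1, mu1, nu1, (S1, T1)⟩) *
      SA.bas ⟨e.1.1, T.1, S.1, (T.2, S.2)⟩ = SA.astar prod := by
    rw [hprod, SA.astar_mul]
    congr 1
    exact (SA.astar_bas e.1.1 S.1 T.1 S.2 T.2).symm
  rw [hstar] at hrel0
  have hrel : prod - ∑ y : TabOf Λ e.1.1, c0 y • SA.bas (f y)
      ∈ Submodule.span R
        (SA.bas '' {j : DJMIndex Λ | MultiComp.SDominates j.1.1 e.1.1.1}) := by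
    have h1 := astar_mem_span_sdom SA hrel0
    rw [map_sub, astar_astar, map_sum] at h1
    simp only [map_smul, SA.astar_bas] at h1
    exact h1
  have hcoord : ∀ y : TabOf Λ e.1.1, SA.bas.repr prod (f y) = c0 y := by
    intro y
    have h0 : SA.bas.repr (prod - ∑ y : TabOf Λ e.1.1, c0 y • SA.bas (f y)) (f y) = 0 :=
      repr_zero_of_mem_span_image SA hrel (fun hsd => hsd.2 rfl)
    rw [map_sub, Finsupp.sub_apply, repr_sum_smul_apply SA c0 f hfinj y] at h0
    exact sub_eq_zero.1 h0
  set G := prod - ∑ T' : TabOf Λ e.1.1,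
    (if nu1 = T'.1 ∧ T' ∈ pJp P e then c0 T' else 0) • SA.bas (f T') with hG
  show G ∈ SA.SpVee P e
  rw [← SA.bas.sum_repr G]
  apply Submodule.sum_mem
  intro idx _
  by_cases hz : SA.bas.repr G idx = 0
  · rw [hz, zero_smul]
    exact Submodule.zero_mem _
  apply Submodule.smul_mem
  by_cases hrange : ∃ y : TabOf Λ e.1.1, f y = idx
  · obtain ⟨y0, rfl⟩ := hrange
    have hGy : SA.bas.repr G (f y0)
        = c0 y0 - (if nu1 = y0.1 ∧ y0 ∈ pJp P e then c0 y0 else 0) := by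
      rw [hG, map_sub, Finsupp.sub_apply, hcoord y0,
        repr_sum_smul_apply SA _ f hfinj y0]
    by_cases hy0 : nu1 = y0.1 ∧ y0 ∈ pJp P e
    · exact absurd (by rw [hGy, if_pos hy0, sub_self]) hz
    by_cases hnu1 : nu1 = y0.1
    · exfalso
      have hyJp : y0 ∉ pJp P e := fun hin => hy0 ⟨hnu1, hin⟩
      have hc0ne : c0 y0 ≠ 0 := fun h0 => hz (by rw [hGy, if_neg hy0, h0, sub_zero])
      have hprodne : SA.bas.repr prod (f y0) ≠ 0 := by
        rw [hcoord y0]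
        exact hc0ne
      have hgood : GoodIdx P (f y0) := good_supp SA P hm hgST hg1 hprodne
      have hbfalse : e.1.2 = false := by
        cases hbb : e.1.2 with
        | false => rfl
        | true => exact absurd (Or.inl hbb) hyJp
      have hnc : ¬ pCond P e.1.1 y0 := fun hc => hyJp (Or.inr hc)
      have hScond : pCond P e.1.1 S := by
        rcases hS with ⟨htrue, _⟩ | ⟨_, hc⟩
        · rw [hbfalse] at htrue
          exact absurd htrue (by simp)
        · exact hc
      have hαne : P.alphaP S.1.1 ≠ P.alphaP y0.1.1 := by
        intro hA
        apply hnc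
        show P.aP y0.1.1 = P.aP e.1.1.1
        rw [← P.aP_eq_of_alphaP_eq hA]
        exact hScond
      exact (hgood hαne).2 hScond
    · exfalso
      have hc00 : c0 y0 = 0 := by
        by_contra hc0ne
        have hprodne : SA.bas.repr prod (f y0) ≠ 0 := by
          rw [hcoord y0]
          exact hc0ne
        obtain ⟨-, hν2, -, -⟩ :=
          main_supp SA e.1.1 lam1 S.1 T.1 mu1 nu1 S.2 T.2 S1 T1 (f y0) hprodne
        exact hnu1 hν2.symm
      exact hz (by rw [hGy, if_neg hy0, hc00, sub_zero])
  · have hsum0 : SA.bas.repr (∑ T' : TabOf Λ e.1.1,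
        (if nu1 = T'.1 ∧ T' ∈ pJp P e then c0 T' else 0) • SA.bas (f T')) idx = 0 :=
      repr_sum_smul_apply_of_ne SA _ f (fun y heq => hrange ⟨y, heq⟩)
    have hprodne : SA.bas.repr prod idx ≠ 0 := by
      rw [hG, map_sub, Finsupp.sub_apply, hsum0, sub_zero] at hz
      exact hz
    have hgood : GoodIdx P idx := good_supp SA P hm hgST hg1 hprodne
    obtain ⟨-, -, -, hd1⟩ :=
      main_supp SA e.1.1 lam1 S.1 T.1 mu1 nu1 S.2 T.2 S1 T1 idx hprodne
    have hsd : MultiComp.SDominates idx.1.1 e.1.1.1 := by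
      rcases hd1 with ⟨y, hy⟩ | h
      · exact absurd hy.symm (fun hh => hrange ⟨y, hh⟩)
      · exact h
    exact bas_mem_spVee SA P hgood hsd

end SchurAlgebra

end AuxBased2
/-! ## Statement 0 (Shoji–Wada, Theorem 2.6)

The `R`-span `S^p` of `Z^p` is a unital subalgebra of `S(Λ)`, and `S^p` is a
standardly based algebra with standard basis `Z^p` over the poset `Σ^p`. -/

theorem Sp_is_standardly_based
    {R : Type} [CommRing R] [IsDomain R] {n r g : ℕ} {m : Fin r → ℕ}
    (hn : 0 < n) (hr : 0 < r) (hm : ∀ k, 0 < m k)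
    {Λ : Finset (MultiComp n r m)} (hΛ : Saturated Λ)
    (SA : SchurAlgebra R Λ) (P : BlockCtx r g) :
    -- `S^p` contains the identity element and is closed under multiplication
    ((1 : SA.carrier) ∈ Submodule.span R (SA.ZpSet P) ∧
      ∀ x ∈ Submodule.span R (SA.ZpSet P), ∀ y ∈ Submodule.span R (SA.ZpSet P),
        x * y ∈ Submodule.span R (SA.ZpSet P)) ∧
    -- `Z^p` is the disjoint union of the sets `Z^p(ε)`, `ε ∈ Σ^p`
    (SA.ZpSet P = ⋃ e : SigmaPIdx Λ P, SA.ZpAt P e) ∧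
    (∀ e f : SigmaPIdx Λ P, e ≠ f → SA.ZpAt P e ∩ SA.ZpAt P f = ∅) ∧
    -- left standardly based property: for `φ ∈ S^p` and `φ_{S,T} ∈ Z^p(ε)`,
    -- `φ ⬝ φ_{S,T} ≡ ∑_{S' ∈ I^p(ε)} f_{S'} φ_{S',T} mod (S^p)^{∨ε}`, with
    -- coefficients `f_{S'}` depending only on `(φ, S, S')` and not on `T`
    (∀ phi ∈ Submodule.span R (SA.ZpSet P), ∀ (e : SigmaPIdx Λ P),
      ∀ S ∈ pIp P e,
        ∃ c : TabOf Λ e.1.1 → R, (∀ x, x ∉ pIp P e → c x = 0) ∧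
          ∀ T ∈ pJp P e,
            phi * SA.bas ⟨e.1.1, S.1, T.1, (S.2, T.2)⟩ -
                ∑ S' : TabOf Λ e.1.1, c S' • SA.bas ⟨e.1.1, S'.1, T.1, (S'.2, T.2)⟩
              ∈ SA.SpVee P e) ∧
    -- right standardly based property: `φ_{S,T} ⬝ φ ≡ ∑_{T' ∈ J^p(ε)} f'_{T'}
    -- φ_{S,T'} mod (S^p)^{∨ε}`, with coefficients depending only on
    -- `(φ, T, T')` and not on `S`
    (∀ phi ∈ Submodule.span R (SA.ZpSet P), ∀ (e : SigmaPIdx Λ P),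
      ∀ T ∈ pJp P e,
        ∃ c : TabOf Λ e.1.1 → R, (∀ x, x ∉ pJp P e → c x = 0) ∧
          ∀ S ∈ pIp P e,
            SA.bas ⟨e.1.1, S.1, T.1, (S.2, T.2)⟩ * phi -
                ∑ T' : TabOf Λ e.1.1, c T' • SA.bas ⟨e.1.1, S.1, T'.1, (S.2, T'.2)⟩
              ∈ SA.SpVee P e) := by
  classical
  refine ⟨⟨?_, ?_⟩, ?_, ?_, ?_, ?_⟩
  · -- the identity lies in `S^p`
    rw [← SA.phiId_sum]
    apply Submodule.sum_mem
    intro ρ _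
    have h3 : SA.phiId ρ = SA.phiId ρ * SA.phiId ρ * SA.phiId ρ := by
      rw [SA.phiId_mul, if_pos rfl, SA.phiId_mul, if_pos rfl]
    rw [h3, SA.zpSet_eq_image P]
    refine Submodule.span_mono (Set.image_mono ?_)
      (SchurAlgebra.sandwich_mem_span SA (SA.phiId ρ) ρ ρ)
    intro j hj hα
    exact absurd ((congrArg (fun t : LamS Λ => P.alphaP t.1) hj.1).trans
      (congrArg (fun t : LamS Λ => P.alphaP t.1) hj.2).symm) hα
  · -- closure under multiplication
    intro x hx y hy
    rw [SA.zpSet_eq_image P] at hx hy ⊢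
    rw [SA.bas.mem_span_image] at hx hy ⊢
    intro idx hidx
    by_contra hbad
    have hne : SA.bas.repr (x * y) idx ≠ 0 :=
      Finsupp.mem_support_iff.1 (Finset.mem_coe.1 hidx)
    apply hne
    have hxy : x * y = ∑ i : DJMIndex Λ, ∑ j : DJMIndex Λ,
        (SA.bas.repr x i * SA.bas.repr y j) • (SA.bas i * SA.bas j) := by
      conv_lhs => rw [← SA.bas.sum_repr x, ← SA.bas.sum_repr y]
      rw [Finset.sum_mul]
      refine Finset.sum_congr rfl fun i _ => ?_
      rw [Finset.mul_sum]
      refine Finset.sum_congr rfl fun j _ => ?_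
      rw [smul_mul_assoc, mul_smul_comm, smul_smul]
    rw [hxy, map_sum, Finsupp.finset_sum_apply]
    refine Finset.sum_eq_zero fun i _ => ?_
    rw [map_sum, Finsupp.finset_sum_apply]
    refine Finset.sum_eq_zero fun j _ => ?_
    rw [map_smul, Finsupp.smul_apply, smul_eq_mul]
    rcases eq_or_ne (SA.bas.repr x i) 0 with h0 | h0
    · rw [h0, zero_mul, zero_mul]
    rcases eq_or_ne (SA.bas.repr y j) 0 with h1 | h1
    · rw [h1, mul_zero, zero_mul]
    rcases eq_or_ne (SA.bas.repr (SA.bas i * SA.bas j) idx) 0 with h2 | h2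
    · rw [h2, mul_zero]
    refine absurd (SchurAlgebra.good_supp SA P hm ?_ ?_ h2) hbad
    · exact hx (Finset.mem_coe.2 (Finsupp.mem_support_iff.2 h0))
    · exact hy (Finset.mem_coe.2 (Finsupp.mem_support_iff.2 h1))
  · -- `Z^p = ⋃ Z^p(ε)`
    ext x
    constructor
    · rintro ⟨lam, mu, nu, S, T, hc, rfl⟩
      obtain ⟨f, -, hf⟩ :=
        SchurAlgebra.exists_zpAt SA P (idx := ⟨lam, mu, nu, (S, T)⟩) hc
      exact Set.mem_iUnion.2 ⟨f, hf⟩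
    · intro hx
      obtain ⟨f, hf⟩ := Set.mem_iUnion.1 hx
      obtain ⟨S, hS, T, hT, rfl⟩ := hf
      exact ⟨f.1.1, S.1, T.1, S.2, T.2, SchurAlgebra.good_of_mem P f S T hS hT, rfl⟩
  · -- disjointness of the `Z^p(ε)`
    intro e f hef
    rw [Set.eq_empty_iff_forall_notMem]
    rintro x ⟨⟨S, hS, T, hT, rfl⟩, ⟨S', hS', T', hT', hx⟩⟩
    have hidx : (⟨e.1.1, S.1, T.1, (S.2, T.2)⟩ : DJMIndex Λ)
        = ⟨f.1.1, S'.1, T'.1, (S'.2, T'.2)⟩ := SA.bas.injective hx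
    have hshape : e.1.1 = f.1.1 := congrArg Sigma.fst hidx
    have hSmu : S.1 = S'.1 := congrArg (fun j : DJMIndex Λ => j.2.1) hidx
    apply hef
    have hbool : e.1.2 = f.1.2 := by
      by_contra hbne
      cases hbe : e.1.2 with
      | false =>
        have hbf : f.1.2 = true := by
          cases hbf : f.1.2 with
          | true => rfl
          | false => exact absurd (by rw [hbe, hbf]) hbne
        have hlt : vecLT (P.aP S'.1.1) (P.aP f.1.1.1) := by
          rcases hS' with ⟨-, h⟩ | ⟨hc, -⟩
          · exact h
          · rw [hbf] at hc
            exact absurd hc (by simp)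
        have hc' : P.aP S.1.1 = P.aP e.1.1.1 := by
          rcases hS with ⟨hc, -⟩ | ⟨-, h⟩
          · rw [hbe] at hc
            exact absurd hc (by simp)
          · exact h
        apply hlt.2
        rw [← hSmu, ← hshape]
        exact hc'
      | true =>
        have hbf : f.1.2 = false := by
          cases hbf : f.1.2 with
          | false => rfl
          | true => exact absurd (by rw [hbe, hbf]) hbne
        have hlt : vecLT (P.aP S.1.1) (P.aP e.1.1.1) := by
          rcases hS with ⟨-, h⟩ | ⟨hc, -⟩
          · exact h
          · rw [hbe] at hc
            exact absurd hc (by simp)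
        have hc' : P.aP S'.1.1 = P.aP f.1.1.1 := by
          rcases hS' with ⟨hc, -⟩ | ⟨-, h⟩
          · rw [hbf] at hc
            exact absurd hc (by simp)
          · exact h
        apply hlt.2
        rw [hSmu, hshape]
        exact hc'
    exact Subtype.ext (Prod.ext hshape hbool)
  · -- left standardly based property
    intro phi hphi e S hS
    rw [SA.zpSet_eq_image P] at hphi
    induction hphi using Submodule.span_induction with
    | mem x hxmem =>
      obtain ⟨i1, hgi, rfl⟩ := hxmem
      exact SchurAlgebra.left_based SA P hm i1 hgi e S hS
    | zero =>
      exact ⟨0, fun _ _ => rfl, fun T hT => by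
        simpa using Submodule.zero_mem (SA.SpVee P e)⟩
    | add x y hx hy ihx ihy =>
      obtain ⟨c1, hc1s, hc1⟩ := ihx
      obtain ⟨c2, hc2s, hc2⟩ := ihy
      refine ⟨c1 + c2, fun x hx => by
        rw [Pi.add_apply, hc1s x hx, hc2s x hx, add_zero], fun T hT => ?_⟩
      have hmem := Submodule.add_mem _ (hc1 T hT) (hc2 T hT)
      convert hmem using 1
      rw [add_mul]
      simp only [Pi.add_apply, add_smul]
      rw [Finset.sum_add_distrib]
      abel
    | smul a x hx ihx =>
      obtain ⟨c1, hc1s, hc1⟩ := ihx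
      refine ⟨a • c1, fun x hx => by
        rw [Pi.smul_apply, hc1s x hx, smul_zero], fun T hT => ?_⟩
      have hmem := Submodule.smul_mem _ a (hc1 T hT)
      convert hmem using 1
      rw [smul_mul_assoc]
      rw [show (∑ S' : TabOf Λ e.1.1,
            (a • c1) S' • SA.bas ⟨e.1.1, S'.1, T.1, (S'.2, T.2)⟩)
          = a • ∑ S' : TabOf Λ e.1.1,
            c1 S' • SA.bas ⟨e.1.1, S'.1, T.1, (S'.2, T.2)⟩ from by
        rw [Finset.smul_sum]
        exact Finset.sum_congr rfl fun S' _ => by rw [Pi.smul_apply, smul_assoc]]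
      rw [← smul_sub]
  · -- right standardly based property
    intro phi hphi e T hT
    rw [SA.zpSet_eq_image P] at hphi
    induction hphi using Submodule.span_induction with
    | mem x hxmem =>
      obtain ⟨i1, hgi, rfl⟩ := hxmem
      exact SchurAlgebra.right_based SA P hm i1 hgi e T hT
    | zero =>
      exact ⟨0, fun _ _ => rfl, fun S hS => by
        simpa using Submodule.zero_mem (SA.SpVee P e)⟩
    | add x y hx hy ihx ihy =>
      obtain ⟨c1, hc1s, hc1⟩ := ihx
      obtain ⟨c2, hc2s, hc2⟩ := ihy
      refine ⟨c1 + c2, fun x hx => by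
        rw [Pi.add_apply, hc1s x hx, hc2s x hx, add_zero], fun S hS => ?_⟩
      have hmem := Submodule.add_mem _ (hc1 S hS) (hc2 S hS)
      convert hmem using 1
      rw [mul_add]
      simp only [Pi.add_apply, add_smul]
      rw [Finset.sum_add_distrib]
      abel
    | smul a x hx ihx =>
      obtain ⟨c1, hc1s, hc1⟩ := ihx
      refine ⟨a • c1, fun x hx => by
        rw [Pi.smul_apply, hc1s x hx, smul_zero], fun S hS => ?_⟩
      have hmem := Submodule.smul_mem _ a (hc1 S hS)
      convert hmem using 1
      rw [mul_smul_comm]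
      rw [show (∑ T' : TabOf Λ e.1.1,
            (a • c1) T' • SA.bas ⟨e.1.1, S.1, T'.1, (S.2, T'.2)⟩)
          = a • ∑ T' : TabOf Λ e.1.1,
            c1 T' • SA.bas ⟨e.1.1, S.1, T'.1, (S.2, T'.2)⟩ from by
        rw [Finset.smul_sum]
        exact Finset.sum_congr rfl fun T' _ => by rw [Pi.smul_apply, smul_assoc]]
      rw [← smul_sub]
end
end

section
/- S(Λ) = S^p · S^{p*}: every element of the cyclotomic q-Schur algebra S(Λ) is a finite sum of products φψ with φ ∈ S^p and ψ ∈ S^{p*}, where S^{p*} is the image of S^p under the algebra anti-automorphism * of S(Λ) determined on the cellular basis by φ_{ST} ↦ φ_{TS}. -/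
/-!
Common framework for the formalization of results of Shoji–Wada,
"Cyclotomic q-Schur algebras associated to the Ariki-Koike algebra".
-/

open scoped BigOperators TensorProduct
open MulOpposite

noncomputable section

/-! ## Statement 1 (Shoji–Wada, Proposition 2.11)

`S(Λ) = S^p ⬝ S^{p*}`: every element of `S(Λ)` is a finite sum of products
`φ ψ` with `φ ∈ S^p` and `ψ ∈ S^{p*}`, where `S^{p*}` is the image of `S^p`
under the anti-automorphism `*` of `S(Λ)` (determined by `φ_{S,T} ↦ φ_{T,S}`). -/

section SWAux

variable {n r g : ℕ} {m : Fin r → ℕ}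

/-- Counting lemma: existence of a semistandard tableau of shape `lam` and type
`mu` forces `a_p(μ) ≤ a_p(λ)` componentwise. -/
theorem aP_le_of_sstab (P : BlockCtx r g) {lam mu : MultiComp n r m}
    (S : SSTab lam mu) (b : Fin g) : P.aP mu b ≤ P.aP lam b := by
  classical
  have hsum : ∀ (ν : MultiComp n r m),
      (∑ k ∈ Finset.univ.filter fun k => P.π k < b, ν.compSize k)
        = ∑ e ∈ Finset.univ.filter (fun e : MCEntry r m => P.π e.1 < b),
            ν.part e.1 e.2 := by
    intro ν
    rw [Finset.sum_filter, Finset.sum_filter, ← Finset.univ_sigma_univ,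
      Finset.sum_sigma]
    exact Finset.sum_congr rfl fun k _ => by
      by_cases hk : P.π k < b <;> simp [hk, MultiComp.compSize]
  have step1 : P.aP mu b =
      (Finset.univ.filter fun c : lam.Cell => P.π (S.entry c).1 < b).card := by
    rw [Finset.card_eq_sum_card_fiberwise (f := S.entry)
          (t := Finset.univ.filter fun e : MCEntry r m => P.π e.1 < b)
          (fun c hc => by
            simp only [Finset.mem_coe, Finset.mem_filter, Finset.mem_univ, true_and] at hc ⊢
            exact hc)]
    show P.aP mu b = ∑ e ∈ Finset.univ.filter (fun e : MCEntry r m => P.π e.1 < b), _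
    unfold BlockCtx.aP
    rw [hsum mu]
    refine Finset.sum_congr rfl fun e he => ?_
    simp only [Finset.mem_filter, Finset.mem_univ, true_and] at he
    rw [S.typeCount e, Fintype.card_subtype]
    congr 1
    ext c
    simp only [Finset.mem_filter, Finset.mem_univ, true_and]
    constructor
    · intro h
      exact ⟨by rw [h]; exact he, h⟩
    · rintro ⟨-, h⟩
      exact h
  have step3 : (Finset.univ.filter fun c : lam.Cell => P.π c.1 < b).card
      = P.aP lam b := by
    rw [Finset.card_filter, ← Finset.univ_sigma_univ, Finset.sum_sigma]
    unfold BlockCtx.aP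
    rw [Finset.sum_filter]
    refine Finset.sum_congr rfl fun k _ => ?_
    by_cases hk : P.π k < b
    · simp only [hk, if_true]
      rw [Finset.sum_const, Finset.card_univ, smul_eq_mul, mul_one]
      simp [MultiComp.compSize, Fintype.card_sigma]
    · simp [hk]
  rw [step1, ← step3]
  apply Finset.card_le_card
  intro c hc
  simp only [Finset.mem_filter, Finset.mem_univ, true_and] at hc ⊢
  exact lt_of_le_of_lt (P.mono (S.compLE c)) hc

/-- the partial sums `a_p` determine the block sizes `α_p` -/
theorem alphaP_eq_of_aP_eq (P : BlockCtx r g) {mu lam : MultiComp n r m}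
    (h : P.aP mu = P.aP lam) : P.alphaP mu = P.alphaP lam := by
  classical
  funext b
  let G : MultiComp n r m → ℕ → ℕ := fun ν t =>
    ∑ k ∈ Finset.univ.filter fun k => (P.π k : ℕ) < t, ν.compSize k
  have hGb : ∀ (ν : MultiComp n r m) (b : Fin g), G ν b = P.aP ν b := by
    intro ν b
    refine Finset.sum_congr ?_ fun _ _ => rfl
    ext k
    simp only [Finset.mem_filter, Finset.mem_univ, true_and, Fin.lt_def]
  have hGg : ∀ ν : MultiComp n r m, G ν g = n := by
    intro ν
    have huniv : (Finset.univ.filter fun k => ((P.π k : ℕ) < g)) = Finset.univ := by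
      ext k; simp [(P.π k).isLt]
    show (∑ k ∈ Finset.univ.filter fun k => (P.π k : ℕ) < g, ν.compSize k) = n
    rw [huniv]
    simpa [MultiComp.compSize] using ν.sum_eq
  have hsplit : ∀ ν : MultiComp n r m,
      G ν ((b : ℕ) + 1) = G ν b + P.alphaP ν b := by
    intro ν
    show (∑ k ∈ Finset.univ.filter fun k => (P.π k : ℕ) < (b : ℕ) + 1, ν.compSize k)
      = (∑ k ∈ Finset.univ.filter fun k => (P.π k : ℕ) < (b : ℕ), ν.compSize k)
        + P.alphaP ν b
    unfold BlockCtx.alphaP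
    rw [Finset.sum_filter, Finset.sum_filter, Finset.sum_filter,
      ← Finset.sum_add_distrib]
    refine Finset.sum_congr rfl fun k _ => ?_
    have hval : (P.π k = b) ↔ ((P.π k : ℕ) = (b : ℕ)) := Fin.ext_iff
    by_cases h1 : (P.π k : ℕ) < (b : ℕ) + 1
    · by_cases h2 : (P.π k : ℕ) < (b : ℕ)
      · have h3 : ¬ P.π k = b := by rw [hval]; omega
        simp [h1, h2, h3]
      · have h3 : P.π k = b := by rw [hval]; omega
        simp [h1, h2, h3]
    · have h2 : ¬ (P.π k : ℕ) < (b : ℕ) := by omega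
      have h3 : ¬ P.π k = b := by rw [hval]; omega
      simp [h1, h2, h3]
  have h1 : G mu b = G lam b := by rw [hGb, hGb, h]
  have h2 : G mu ((b : ℕ) + 1) = G lam ((b : ℕ) + 1) := by
    by_cases hb : (b : ℕ) + 1 < g
    · calc G mu ((b : ℕ) + 1) = P.aP mu ⟨(b : ℕ) + 1, hb⟩ := hGb mu ⟨_, hb⟩
        _ = P.aP lam ⟨(b : ℕ) + 1, hb⟩ := by rw [h]
        _ = G lam ((b : ℕ) + 1) := (hGb lam ⟨_, hb⟩).symm
    · have hg : (b : ℕ) + 1 = g := by have := b.isLt; omega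
      rw [hg, hGg, hGg]
  have e1 := hsplit mu
  have e2 := hsplit lam
  omega

variable {R : Type} [CommRing R] {Λ : Finset (MultiComp n r m)}

/-- the anti-automorphism `*` is an involution -/
theorem astar_astar (SA : SchurAlgebra R Λ) (x : SA.carrier) :
    SA.astar (SA.astar x) = x := by
  have hbas : ∀ j : DJMIndex Λ, SA.astar (SA.astar (SA.bas j)) = SA.bas j := by
    rintro ⟨lam, mu, nu, S, T⟩
    rw [SA.astar_bas, SA.astar_bas]
  have hx := SA.bas.sum_repr x
  calc SA.astar (SA.astar x)
      = SA.astar (SA.astar (∑ j, SA.bas.repr x j • SA.bas j)) := by rw [hx]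
    _ = ∑ j, SA.bas.repr x j • SA.astar (SA.astar (SA.bas j)) := by
        rw [map_sum, map_sum]
        exact Finset.sum_congr rfl fun j _ => by
          rw [LinearMap.map_smul, LinearMap.map_smul]
    _ = ∑ j, SA.bas.repr x j • SA.bas j :=
        Finset.sum_congr rfl fun j _ => by rw [hbas j]
    _ = x := hx

/-- `φ_μ` and `(φ_μ)^*` lie in the span of `Z^p` -/
theorem phiId_mem_span (SA : SchurAlgebra R Λ) (P : BlockCtx r g) (ν : LamS Λ) :
    SA.phiId ν ∈ Submodule.span R (SA.ZpSet P) ∧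
      SA.astar (SA.phiId ν) ∈ Submodule.span R (SA.ZpSet P) := by
  have sandwich : ∀ j : DJMIndex Λ, SA.phiId ν * SA.bas j * SA.phiId ν =
      if ν = j.2.1 ∧ ν = j.2.2.1 then SA.bas j else 0 := by
    rintro ⟨lam, mu, nu, S, T⟩
    rw [SA.phiId_mul_bas, ite_mul, zero_mul, SA.bas_mul_phiId]
    by_cases h1 : ν = mu <;> by_cases h2 : ν = nu <;> simp [h1, h2]
  have hpp : SA.phiId ν * SA.phiId ν = SA.phiId ν := by
    rw [SA.phiId_mul]; simp
  have expand : SA.phiId ν =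
      SA.phiId ν * (∑ j, SA.bas.repr (SA.phiId ν) j • SA.bas j) * SA.phiId ν := by
    rw [SA.bas.sum_repr, hpp, hpp]
  have key : SA.phiId ν = ∑ j : DJMIndex Λ, SA.bas.repr (SA.phiId ν) j •
      (SA.phiId ν * SA.bas j * SA.phiId ν) := by
    calc SA.phiId ν = _ := expand
      _ = ∑ j, SA.bas.repr (SA.phiId ν) j •
            (SA.phiId ν * SA.bas j * SA.phiId ν) := by
          rw [Finset.mul_sum, Finset.sum_mul]
          exact Finset.sum_congr rfl fun j _ => by
            rw [mul_smul_comm, smul_mul_assoc]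
  have mem1 : ∀ j : DJMIndex Λ,
      (if ν = j.2.1 ∧ ν = j.2.2.1 then SA.bas j else 0) ∈
        Submodule.span R (SA.ZpSet P) := by
    rintro ⟨lam, mu, nu, S, T⟩
    dsimp only
    split_ifs with h
    · exact Submodule.subset_span ⟨lam, mu, nu, S, T,
        fun hne => absurd
          (congrArg (fun x : LamS Λ => P.alphaP x.1) (h.1.symm.trans h.2)) hne, rfl⟩
    · exact Submodule.zero_mem _
  constructor
  · rw [key]
    exact Submodule.sum_mem _ fun j _ => Submodule.smul_mem _ _
      (by rw [sandwich j]; exact mem1 j)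
  · rw [key, map_sum]
    refine Submodule.sum_mem _ fun j _ => ?_
    rw [LinearMap.map_smul]
    refine Submodule.smul_mem _ _ ?_
    rw [sandwich j]
    rcases j with ⟨lam, mu, nu, S, T⟩
    dsimp only
    split_ifs with h
    · rw [SA.astar_bas]
      exact Submodule.subset_span ⟨lam, nu, mu, T, S,
        fun hne => absurd
          (congrArg (fun x : LamS Λ => P.alphaP x.1) (h.2.symm.trans h.1)) hne, rfl⟩
    · rw [map_zero]; exact Submodule.zero_mem _

end SWAux

theorem schur_eq_Sp_mul_SpStar
    {R : Type} [CommRing R] [IsDomain R] {n r g : ℕ} {m : Fin r → ℕ}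
    (hn : 0 < n) (hr : 0 < r) (hm : ∀ k, 0 < m k)
    {Λ : Finset (MultiComp n r m)} (hΛ : Saturated Λ)
    (SA : SchurAlgebra R Λ) (P : BlockCtx r g) :
    ∀ x : SA.carrier,
      x ∈ AddSubmonoid.closure
        {z : SA.carrier | ∃ a ∈ Submodule.span R (SA.ZpSet P),
          ∃ b ∈ Submodule.span R (SA.ZpSet P), z = a * SA.astar b} := by
  intro x
  have hx := SA.bas.sum_repr x
  rw [← hx]
  refine AddSubmonoid.sum_mem _ fun j _ => ?_
  refine AddSubmonoid.subset_closure ?_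
  rcases j with ⟨lam, mu, nu, S, T⟩
  set c := SA.bas.repr x ⟨lam, mu, nu, (S, T)⟩ with hc
  have hle_mu : ∀ b, P.aP mu.1 b ≤ P.aP lam.1 b := fun b => aP_le_of_sstab P S b
  have hle_nu : ∀ b, P.aP nu.1 b ≤ P.aP lam.1 b := fun b => aP_le_of_sstab P T b
  by_cases hA : P.alphaP mu.1 ≠ P.alphaP nu.1 → vecLT (P.aP mu.1) (P.aP lam.1)
  · -- `φ_{S,T} ∈ Z^p`; use `φ_{S,T} = φ_{S,T} · (φ_ν^*)^*`
    refine ⟨c • SA.bas ⟨lam, mu, nu, (S, T)⟩, ?_, SA.astar (SA.phiId nu),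
      (phiId_mem_span SA P nu).2, ?_⟩
    · exact Submodule.smul_mem _ _
        (Submodule.subset_span ⟨lam, mu, nu, S, T, hA, rfl⟩)
    · rw [astar_astar, smul_mul_assoc, SA.bas_mul_phiId]
      simp
  · -- `φ_{T,S} ∈ Z^p`; use `φ_{S,T} = φ_μ · (φ_{T,S})^*`
    push_neg at hA
    obtain ⟨hne, hnlt⟩ := hA
    have heq : P.aP mu.1 = P.aP lam.1 := by
      by_contra hne'
      exact hnlt ⟨hle_mu, hne'⟩
    have hnu_ne : P.aP nu.1 ≠ P.aP lam.1 := fun h' =>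
      hne ((alphaP_eq_of_aP_eq P heq).trans (alphaP_eq_of_aP_eq P h').symm)
    refine ⟨c • SA.phiId mu, Submodule.smul_mem _ _ (phiId_mem_span SA P mu).1,
      SA.bas ⟨lam, nu, mu, (T, S)⟩,
      Submodule.subset_span ⟨lam, nu, mu, T, S, fun _ => ⟨hle_nu, hnu_ne⟩, rfl⟩, ?_⟩
    rw [SA.astar_bas, smul_mul_assoc, SA.phiId_mul_bas]
    simp
end
end

section
/- The quotient algebra barS^p = S^p/hatS^p is a cellular algebra with cellular basis barZ^p = {barφ_{ST} : S, T ∈ T_0^p(λ), λ ∈ Λ^+}: (i) the map barφ_{ST} ↦ barφ_{TS} extends to an R-algebra anti-automorphism * of barS^p; (ii) for every λ ∈ Λ^+, every S, T ∈ T_0^p(λ) and every barφ ∈ barS^p one has barφ_{ST} · barφ ≡ Σ_{T' ∈ T_0^p(λ)} r_{T'} barφ_{ST'} mod (barS^p)^{∨λ}, where r_{T'} ∈ R depends on λ, T and barφ but not on S, and (barS^p)^{∨λ} is the R-span of the barφ_{S'T'} with S', T' ∈ T_0^p(λ') for λ' ⊳ λ. -/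
/-!
Common framework for the formalization of results of Shoji–Wada,
"Cyclotomic q-Schur algebras associated to the Ariki-Koike algebra".
-/

open scoped BigOperators TensorProduct
open MulOpposite

noncomputable section

/-! ## Statement 2 (Shoji–Wada, Theorem 2.13)

The quotient algebra `\bar S^p = S^p / \hat S^p` is a cellular algebra with
cellular basis `\bar Z^p = {\barφ_{S,T} : S, T ∈ T₀^p(λ), λ ∈ Λ⁺}`. -/

section SW2Aux

variable {n r g : ℕ} {m : Fin r → ℕ}

theorem SW2_compSize_total (mu : MultiComp n r m) : ∑ k, mu.compSize k = n :=
  mu.sum_eq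

theorem SW2_alphaP_of_aP (P : BlockCtx r g) {mu nu : MultiComp n r m}
    (h : P.aP mu = P.aP nu) : P.alphaP mu = P.alphaP nu := by
  funext b
  have key : ∀ xi : MultiComp n r m,
      P.aP xi b + P.alphaP xi b
        = ∑ k ∈ Finset.univ.filter (fun k => P.π k ≤ b), xi.compSize k := by
    intro xi
    have hsplit : Finset.univ.filter (fun k => P.π k ≤ b)
        = (Finset.univ.filter fun k => P.π k < b) ∪
          (Finset.univ.filter fun k => P.π k = b) := by
      ext k
      simp only [Finset.mem_filter, Finset.mem_union, Finset.mem_univ, true_and]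
      constructor
      · intro hk
        rcases lt_or_eq_of_le hk with h' | h'
        · exact Or.inl h'
        · exact Or.inr h'
      · rintro (h' | h')
        · exact le_of_lt h'
        · exact le_of_eq h'
    have hdisj : Disjoint (Finset.univ.filter fun k => P.π k < b)
        (Finset.univ.filter fun k => P.π k = b) := by
      rw [Finset.disjoint_left]
      intro k hk1 hk2
      simp only [Finset.mem_filter] at hk1 hk2
      exact absurd (hk2.2 ▸ hk1.2) (lt_irrefl b)
    rw [hsplit, Finset.sum_union hdisj]
    rfl
  have hle : (∑ k ∈ Finset.univ.filter (fun k => P.π k ≤ b), mu.compSize k)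
      = ∑ k ∈ Finset.univ.filter (fun k => P.π k ≤ b), nu.compSize k := by
    by_cases hb : b.1 + 1 < g
    · have hf : (Finset.univ.filter (fun k => P.π k ≤ b))
          = Finset.univ.filter (fun k => P.π k < (⟨b.1 + 1, hb⟩ : Fin g)) := by
        ext k
        simp only [Finset.mem_filter, Finset.mem_univ, true_and]
        constructor
        · intro hk
          exact Fin.lt_def.2 (Nat.lt_succ_of_le (Fin.le_def.1 hk))
        · intro hk
          exact Fin.le_def.2 (Nat.lt_succ_iff.1 (Fin.lt_def.1 hk))
      rw [hf]
      exact congrFun h ⟨b.1 + 1, hb⟩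
    · have hf : (Finset.univ.filter (fun k => P.π k ≤ b)) = Finset.univ := by
        apply Finset.filter_true_of_mem
        intro k _
        have h1 : (P.π k).1 < g := (P.π k).2
        have h2 : b.1 < g := b.2
        exact Fin.le_def.2 (by omega)
      rw [hf, SW2_compSize_total, SW2_compSize_total]
  have k1 := key mu
  have k2 := key nu
  have h1 : P.aP mu b = P.aP nu b := congrFun h b
  omega

end SW2Aux

theorem barSp_is_cellular
    {R : Type} [CommRing R] [IsDomain R] {n r g : ℕ} {m : Fin r → ℕ}
    (hn : 0 < n) (hr : 0 < r) (hm : ∀ k, 0 < m k)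
    {Λ : Finset (MultiComp n r m)} (hΛ : Saturated Λ)
    (SA : SchurAlgebra R Λ) (P : BlockCtx r g)
    (Sp : Subalgebra R SA.carrier)
    (hSp : (Sp : Set SA.carrier) =
      (Submodule.span R (SA.ZpSet P) : Submodule R SA.carrier))
    (BA : BarSchurAlgebra SA P Sp) :
    -- (i) `\barφ_{S,T} ↦ \barφ_{T,S}` extends to an `R`-linear
    -- anti-automorphism `*` of `\bar S^p`
    (∃ bstar : BA.B →ₗ[R] BA.B, Function.Bijective bstar ∧
      (∀ x y : BA.B, bstar (x * y) = bstar y * bstar x) ∧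
      ∀ (lam : LamP Λ) (S T : PTab P lam),
        bstar (BA.barphi lam S T) = BA.barphi lam T S) ∧
    -- (ii) for every `λ ∈ Λ⁺`, `S, T ∈ T₀^p(λ)` and `\barφ ∈ \bar S^p`,
    -- `\barφ_{S,T} ⬝ \barφ ≡ ∑_{T' ∈ T₀^p(λ)} r_{T'} \barφ_{S,T'}
    -- mod (\bar S^p)^{∨λ}`, where `r_{T'}` depends on `λ, T, \barφ` but not on `S`
    (∀ (lam : LamP Λ) (T : PTab P lam) (b : BA.B),
      ∃ c : PTab P lam → R, ∀ S : PTab P lam,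
        BA.barphi lam S T * b - ∑ T' : PTab P lam, c T' • BA.barphi lam S T'
          ∈ BA.BarVee lam) := by
  classical
  -- membership in `Sp` is membership in the span of `Z^p`
  have memIff : ∀ x : SA.carrier, x ∈ Sp ↔ x ∈ Submodule.span R (SA.ZpSet P) := by
    intro x
    rw [← SetLike.mem_coe, hSp, SetLike.mem_coe]
  -- basis elements with both tableaux in `T₀^p(λ)` lie in `S^p`
  have zMem : ∀ (lam : LamP Λ) (S T : PTab P lam),
      SA.bas ⟨lam, S.1.1, T.1.1, (S.1.2, T.1.2)⟩ ∈ Sp := by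
    intro lam S T
    rw [memIff]
    refine Submodule.subset_span ⟨lam, S.1.1, T.1.1, S.1.2, T.1.2, ?_, rfl⟩
    intro hne
    exact absurd (SW2_alphaP_of_aP P (S.2.trans T.2.symm)) hne
  -- the linear map `Mid : S(Λ) → \bar S^p` agreeing with `proj` on `S^p`
  set Mid : SA.carrier →ₗ[R] BA.B := SA.bas.constr R (fun w =>
    if h : pCond P w.1 ⟨w.2.1, w.2.2.2.1⟩ ∧ pCond P w.1 ⟨w.2.2.1, w.2.2.2.2⟩
    then BA.barphi w.1 ⟨⟨w.2.1, w.2.2.2.1⟩, h.1⟩ ⟨⟨w.2.2.1, w.2.2.2.2⟩, h.2⟩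
    else 0) with hMidDef
  have midBas : ∀ (lam : LamP Λ) (mu nu : LamS Λ) (S : SSTab lam.1 mu.1)
      (T : SSTab lam.1 nu.1),
      Mid (SA.bas ⟨lam, mu, nu, (S, T)⟩)
        = if h : pCond P lam ⟨mu, S⟩ ∧ pCond P lam ⟨nu, T⟩
          then BA.barphi lam ⟨⟨mu, S⟩, h.1⟩ ⟨⟨nu, T⟩, h.2⟩ else 0 := by
    intro lam mu nu S T
    exact SA.bas.constr_basis R _ _
  have midProj : ∀ z : ↥Sp, BA.proj z = Mid (z : SA.carrier) := by
    intro z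
    have hz : (z : SA.carrier) ∈ Submodule.span R (SA.ZpSet P) := (memIff _).1 z.2
    have main : ∀ (x : SA.carrier) (_ : x ∈ Submodule.span R (SA.ZpSet P)),
        ∀ hx' : x ∈ Sp, BA.proj ⟨x, hx'⟩ = Mid x := by
      intro x hx
      induction hx using Submodule.span_induction with
      | mem x hmem =>
        intro hx'
        obtain ⟨lam, mu, nu, S, T, hcond, rfl⟩ := hmem
        rw [BA.proj_bas lam mu nu S T _ rfl, midBas]
      | zero =>
        intro hx'
        have h0 : (⟨0, hx'⟩ : ↥Sp) = 0 := rfl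
        rw [h0, map_zero, map_zero]
      | add x y hxs hys ihx ihy =>
        intro hx'
        have hxm : x ∈ Sp := (memIff x).2 hxs
        have hym : y ∈ Sp := (memIff y).2 hys
        have hsum : (⟨x + y, hx'⟩ : ↥Sp) = ⟨x, hxm⟩ + ⟨y, hym⟩ := rfl
        rw [hsum, map_add, ihx hxm, ihy hym, map_add]
      | smul a x hxs ihx =>
        intro hx'
        have hxm : x ∈ Sp := (memIff x).2 hxs
        have hsm : (⟨a • x, hx'⟩ : ↥Sp) = a • (⟨x, hxm⟩ : ↥Sp) := rfl
        rw [hsm, map_smul, ihx hxm, map_smul]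
    exact main _ hz z.2
  -- `Mid` sends `S(Λ)^{∨λ}` into `(\bar S^p)^{∨λ}`
  have midSVee : ∀ (lam : LamP Λ) (x : SA.carrier), x ∈ SA.SVee lam →
      Mid x ∈ BA.BarVee lam := by
    intro lam x hx
    have hmap : Submodule.map Mid (SA.SVee lam) ≤ BA.BarVee lam := by
      rw [SchurAlgebra.SVee, Submodule.map_span]
      refine Submodule.span_le.2 ?_
      rintro y ⟨x', ⟨lam', mu', nu', S', T', hdom, rfl⟩, rfl⟩
      simp only [SetLike.mem_coe]
      rw [midBas]
      by_cases h : pCond P lam' ⟨mu', S'⟩ ∧ pCond P lam' ⟨nu', T'⟩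
      · rw [dif_pos h]
        exact Submodule.subset_span
          ⟨lam', ⟨⟨mu', S'⟩, h.1⟩, ⟨⟨nu', T'⟩, h.2⟩, hdom, rfl⟩
      · rw [dif_neg h]
        exact Submodule.zero_mem _
    exact hmap ⟨x, hx, rfl⟩
  -- `*` on `S(Λ)` is an involution
  have astar_invol : ∀ x : SA.carrier, SA.astar (SA.astar x) = x := by
    have hcomp : SA.astar.comp SA.astar = LinearMap.id := by
      apply SA.bas.ext
      rintro ⟨lam, mu, nu, S, T⟩
      simp only [LinearMap.comp_apply, LinearMap.id_apply]
      rw [SA.astar_bas, SA.astar_bas]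
    intro x
    exact LinearMap.congr_fun hcomp x
  -- `*` preserves `S(Λ)^{∨λ}`
  have astar_svee : ∀ (lam : LamP Λ) (x : SA.carrier), x ∈ SA.SVee lam →
      SA.astar x ∈ SA.SVee lam := by
    intro lam x hx
    have hmap : Submodule.map SA.astar (SA.SVee lam) ≤ SA.SVee lam := by
      rw [SchurAlgebra.SVee, Submodule.map_span]
      refine Submodule.span_le.2 ?_
      rintro y ⟨x', ⟨lam', mu', nu', S', T', hdom, rfl⟩, rfl⟩
      simp only [SetLike.mem_coe]
      rw [SA.astar_bas]
      exact Submodule.subset_span ⟨lam', nu', mu', T', S', hdom, rfl⟩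
    exact hmap ⟨x, hx, rfl⟩
  -- the anti-automorphism of `\bar S^p`
  set bstar : BA.B →ₗ[R] BA.B :=
    BA.bbas.constr R (fun x => BA.bbas ⟨x.1, (x.2.2, x.2.1)⟩) with hbstarDef
  have bstar_bbas : ∀ x : Σ lam : LamP Λ, PTab P lam × PTab P lam,
      bstar (BA.bbas x) = BA.bbas ⟨x.1, (x.2.2, x.2.1)⟩ := by
    intro x
    exact BA.bbas.constr_basis R _ _
  have bstar_barphi : ∀ (lam : LamP Λ) (S T : PTab P lam),
      bstar (BA.barphi lam S T) = BA.barphi lam T S := by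
    intro lam S T
    rw [← BA.bbas_eq lam S T, ← BA.bbas_eq lam T S, bstar_bbas]
  have bstar_invol : Function.Involutive bstar := by
    have hcomp : bstar.comp bstar = LinearMap.id := by
      apply BA.bbas.ext
      rintro ⟨lam, S, T⟩
      simp only [LinearMap.comp_apply, LinearMap.id_apply]
      rw [bstar_bbas, bstar_bbas]
    intro x
    exact LinearMap.congr_fun hcomp x
  -- `bstar ∘ Mid = Mid ∘ astar`
  have bstarMid : bstar.comp Mid = Mid.comp SA.astar := by
    apply SA.bas.ext
    rintro ⟨lam, mu, nu, S, T⟩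
    simp only [LinearMap.comp_apply]
    rw [SA.astar_bas, midBas, midBas]
    by_cases h : pCond P lam ⟨mu, S⟩ ∧ pCond P lam ⟨nu, T⟩
    · rw [dif_pos h, dif_pos (And.intro h.2 h.1), bstar_barphi]
    · rw [dif_neg h, dif_neg (fun h' => h ⟨h'.2, h'.1⟩), map_zero]
  -- `proj` of the distinguished basis elements
  have projPhi : ∀ (lam : LamP Λ) (S T : PTab P lam) (z : ↥Sp),
      (z : SA.carrier) = SA.bas ⟨lam, S.1.1, T.1.1, (S.1.2, T.1.2)⟩ →
      BA.proj z = BA.barphi lam S T := by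
    intro lam S T z hz
    rw [BA.proj_bas lam S.1.1 T.1.1 S.1.2 T.1.2 z hz, dif_pos (And.intro S.2 T.2)]
  -- the key anti-multiplicativity on basis elements
  have key : ∀ (lam mu : LamP Λ) (S T : PTab P lam) (U V : PTab P mu),
      bstar (BA.barphi lam S T * BA.barphi mu U V)
        = BA.barphi mu V U * BA.barphi lam T S := by
    intro lam mu S T U V
    let z1 : ↥Sp := ⟨_, zMem lam S T⟩
    let z2 : ↥Sp := ⟨_, zMem mu U V⟩
    let w1 : ↥Sp := ⟨_, zMem lam T S⟩
    let w2 : ↥Sp := ⟨_, zMem mu V U⟩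
    calc bstar (BA.barphi lam S T * BA.barphi mu U V)
        = bstar (BA.proj (z1 * z2)) := by
          have hp : BA.proj (z1 * z2) = BA.barphi lam S T * BA.barphi mu U V := by
            rw [map_mul BA.proj z1 z2, projPhi lam S T z1 rfl,
              projPhi mu U V z2 rfl]
          rw [hp]
      _ = bstar (Mid ((z1 * z2 : ↥Sp) : SA.carrier)) := by rw [midProj]
      _ = Mid (SA.astar ((z1 * z2 : ↥Sp) : SA.carrier)) :=
          LinearMap.congr_fun bstarMid _
      _ = Mid ((w2 * w1 : ↥Sp) : SA.carrier) := by
          show Mid (SA.astar ((z1 : SA.carrier) * (z2 : SA.carrier))) = _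
          rw [SA.astar_mul]
          show Mid (SA.astar (SA.bas ⟨mu, U.1.1, V.1.1, (U.1.2, V.1.2)⟩) *
               SA.astar (SA.bas ⟨lam, S.1.1, T.1.1, (S.1.2, T.1.2)⟩)) = _
          rw [SA.astar_bas, SA.astar_bas]
          rfl
      _ = BA.proj (w2 * w1) := (midProj _).symm
      _ = BA.barphi mu V U * BA.barphi lam T S := by
          rw [map_mul BA.proj w2 w1, projPhi mu V U w2 rfl, projPhi lam T S w1 rfl]
  -- anti-multiplicativity in general, by bilinearity
  have hmul : ∀ x y : BA.B, bstar (x * y) = bstar y * bstar x := by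
    have hbil : (LinearMap.mul R BA.B).compr₂ bstar
        = (((LinearMap.mul R BA.B).flip).comp bstar).compl₂ bstar := by
      apply BA.bbas.ext
      rintro ⟨lam, S, T⟩
      apply BA.bbas.ext
      rintro ⟨mu, U, V⟩
      simp only [LinearMap.compr₂_apply, LinearMap.mul_apply', LinearMap.compl₂_apply,
        LinearMap.comp_apply, LinearMap.flip_apply]
      rw [BA.bbas_eq lam S T, BA.bbas_eq mu U V, key, bstar_barphi, bstar_barphi]
    intro x y
    have h := LinearMap.congr_fun (LinearMap.congr_fun hbil x) y
    simpa [LinearMap.mul_apply'] using h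
  refine ⟨⟨bstar, bstar_invol.bijective, hmul, bstar_barphi⟩, ?_⟩
  -- part (ii)
  intro lam T b
  obtain ⟨a, rfl⟩ := BA.surj b
  obtain ⟨c, hc⟩ := SA.cellular (SA.astar (a : SA.carrier)) lam T.1.1 T.1.2
  refine ⟨fun T' => c T'.1, ?_⟩
  intro S
  have hD := hc S.1.1 S.1.2
  have hE : SA.astar (SA.astar (a : SA.carrier) *
      SA.bas ⟨lam, T.1.1, S.1.1, (T.1.2, S.1.2)⟩ -
      ∑ x : Σ mu' : LamS Λ, SSTab lam.1 mu'.1,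
        c x • SA.bas ⟨lam, x.1, S.1.1, (x.2, S.1.2)⟩) ∈ SA.SVee lam :=
    astar_svee lam _ hD
  have hE2 : SA.bas ⟨lam, S.1.1, T.1.1, (S.1.2, T.1.2)⟩ * (a : SA.carrier) -
      ∑ x : Σ mu' : LamS Λ, SSTab lam.1 mu'.1,
        c x • SA.bas ⟨lam, S.1.1, x.1, (S.1.2, x.2)⟩ ∈ SA.SVee lam := by
    have heq : SA.astar (SA.astar (a : SA.carrier) *
        SA.bas ⟨lam, T.1.1, S.1.1, (T.1.2, S.1.2)⟩ -
        ∑ x : Σ mu' : LamS Λ, SSTab lam.1 mu'.1,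
          c x • SA.bas ⟨lam, x.1, S.1.1, (x.2, S.1.2)⟩)
        = SA.bas ⟨lam, S.1.1, T.1.1, (S.1.2, T.1.2)⟩ * (a : SA.carrier) -
          ∑ x : Σ mu' : LamS Λ, SSTab lam.1 mu'.1,
            c x • SA.bas ⟨lam, S.1.1, x.1, (S.1.2, x.2)⟩ := by
      rw [map_sub, SA.astar_mul, SA.astar_bas, astar_invol, map_sum]
      congr 1
      refine Finset.sum_congr rfl fun x _ => ?_
      rw [map_smul, SA.astar_bas]
    rw [← heq]
    exact hE
  have hMidE := midSVee lam _ hE2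
  have hmid1 : Mid (SA.bas ⟨lam, S.1.1, T.1.1, (S.1.2, T.1.2)⟩ * (a : SA.carrier))
      = BA.barphi lam S T * BA.proj a := by
    have hcoe : SA.bas ⟨lam, S.1.1, T.1.1, (S.1.2, T.1.2)⟩ * (a : SA.carrier)
        = (((⟨_, zMem lam S T⟩ : ↥Sp) * a : ↥Sp) : SA.carrier) := rfl
    rw [hcoe, ← midProj, map_mul, projPhi lam S T _ rfl]
  have hmid2 : Mid (∑ x : Σ mu' : LamS Λ, SSTab lam.1 mu'.1,
      c x • SA.bas ⟨lam, S.1.1, x.1, (S.1.2, x.2)⟩)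
      = ∑ T' : PTab P lam, c T'.1 • BA.barphi lam S T' := by
    rw [map_sum]
    have hterm : ∀ x : Σ mu' : LamS Λ, SSTab lam.1 mu'.1,
        Mid (c x • SA.bas ⟨lam, S.1.1, x.1, (S.1.2, x.2)⟩)
          = if h : pCond P lam x then c x • BA.barphi lam S ⟨x, h⟩ else 0 := by
      intro x
      rw [map_smul, midBas]
      by_cases h : pCond P lam x
      · rw [dif_pos (And.intro S.2 h), dif_pos h]
      · rw [dif_neg (fun h' => h h'.2), dif_neg h, smul_zero]
    rw [Finset.sum_congr rfl (fun x _ => hterm x)]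
    rw [← Finset.sum_filter_add_sum_filter_not Finset.univ (fun x => pCond P lam x)]
    have h2 : (∑ x ∈ Finset.univ.filter (fun x => ¬ pCond P lam x),
        (if h : pCond P lam x then c x • BA.barphi lam S ⟨x, h⟩ else 0)) = 0 := by
      refine Finset.sum_eq_zero fun x hx => ?_
      rw [dif_neg (Finset.mem_filter.1 hx).2]
    rw [h2, add_zero]
    rw [Finset.sum_subtype (p := fun x => pCond P lam x)
      (Finset.univ.filter fun x => pCond P lam x)
      (fun x => by simp [Finset.mem_filter])
      (fun x => if h : pCond P lam x then c x • BA.barphi lam S ⟨x, h⟩ else 0)]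
    refine Finset.sum_congr rfl fun T' _ => ?_
    rw [dif_pos T'.2]
  have hfin : BA.barphi lam S T * BA.proj a -
      ∑ T' : PTab P lam, c T'.1 • BA.barphi lam S T' ∈ BA.BarVee lam := by
    rw [← hmid1, ← hmid2, ← map_sub]
    exact hMidE
  exact hfin
end
end
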